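/- arXiv:1010.4248 — 4 statements merged into one kernel-verified Lean document; each statement's English description precedes it below -/
import Mathlib

section
/- Let d = 1 and let ‖·‖ be the absolute value on ℝ. Then for every η > 0, g(η) = 2 ∫_0^{1/2} φ(t/η) dt. -/
open MeasureTheory Filter Set
open scoped ENNReal NNReal

noncomputable section

abbrev Rd (d : ℕ) := Fin d → ℝ

/-- `nrm` is a norm on `ℝ^d`. -/
def IsNorm {d : ℕ} (nrm : Rd d → ℝ) : Prop :=
  (∀ x, 0 ≤ nrm x) ∧ (∀ x, nrm x = 0 ↔ x = 0) ∧
  (∀ (c : ℝ) (x : Rd d), nrm (c • x) = |c| * nrm x) ∧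
  (∀ x y, nrm (x + y) ≤ nrm x + nrm y)

/-- The standing assumptions on `φ`: increasing, nonnegative, left continuous,
`lim_{t↓0} φ(t) = 0`, and not identically zero on `[0,∞)`. -/
def PhiOK (φ : ℝ → ℝ) : Prop :=
  MonotoneOn φ (Ici 0) ∧ (∀ t, 0 ≤ t → 0 ≤ φ t) ∧
  (∀ t, 0 < t → Tendsto φ (nhdsWithin t (Iio t)) (nhds (φ t))) ∧
  Tendsto φ (nhdsWithin 0 (Ioi 0)) (nhds 0) ∧
  (∃ t, 0 ≤ t ∧ φ t ≠ 0)

/-- distance from a point to a set, `d(x,A) = inf_{y ∈ A} ‖x - y‖`. -/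
def dSet {d : ℕ} (nrm : Rd d → ℝ) (x : Rd d) (A : Set (Rd d)) : ℝ :=
  sInf ((fun y => nrm (x - y)) '' A)

/-- the unit cube `[0,1)^d`. -/
def unitCube (d : ℕ) : Set (Rd d) := univ.pi fun _ => Ico (0:ℝ) 1

/-- `f_N(η) = inf_C E[φ((N/η)^{1/d} d(U,C))]`, infimum over nonempty codebooks of at most
`⌊N⌋` points, `U` uniform on `[0,1)^d`; it is `∞` for `N < 1` (empty infimum). -/
def fNq {d : ℕ} (nrm : Rd d → ℝ) (φ : ℝ → ℝ) (N η : ℝ) : ℝ≥0∞ :=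
  ⨅ (C : Finset (Rd d)) (_ : C.Nonempty) (_ : (C.card : ℝ) ≤ N),
    ∫⁻ x in unitCube d, ENNReal.ofReal (φ ((N / η) ^ (1 / (d:ℝ)) * dSet nrm x (C : Set (Rd d)))) ∂volume

/-- `g(η) = inf_{N ≥ 1} f_N(η)` for `η > 0`, extended by `g(0) = lim_{η↓0} g(η) = sup_{η>0} g(η)`
for `η ≤ 0`. -/
def gq {d : ℕ} (nrm : Rd d → ℝ) (φ : ℝ → ℝ) (η : ℝ) : ℝ≥0∞ :=
  if 0 < η then ⨅ N ∈ Ici (1:ℝ), fNq nrm φ N η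
  else ⨆ η' ∈ Ioi (0:ℝ), ⨅ N ∈ Ici (1:ℝ), fNq nrm φ N η'

/-- the absolutely continuous part `μ_c` of `μ` with respect to Lebesgue measure. -/
def muc {d : ℕ} (μ : Measure (Rd d)) : Measure (Rd d) :=
  volume.withDensity (μ.rnDeriv volume)

/-- Orlicz norm `‖F(X)‖_φ = inf{t > 0 : E[φ(F(X)/t)] ≤ 1}` (as the `sInf` in `ℝ≥0∞`,
so it is `∞` when no such `t` exists), where `X` has law `μ`. -/
def orliczN {d : ℕ} (φ : ℝ → ℝ) (μ : Measure (Rd d)) (F : Rd d → ℝ) : ℝ≥0∞ :=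
  sInf {s : ℝ≥0∞ | ∃ t : ℝ, 0 < t ∧ s = ENNReal.ofReal t ∧
    ∫⁻ x, ENNReal.ofReal (φ (F x / t)) ∂μ ≤ 1}

/-- the quantization error `δ(N|X,φ)`, where `X` has law `μ`. -/
def quantErr {d : ℕ} (nrm : Rd d → ℝ) (φ : ℝ → ℝ) (μ : Measure (Rd d)) (N : ℝ) : ℝ≥0∞ :=
  ⨅ (C : Finset (Rd d)) (_ : C.Nonempty) (_ : (C.card : ℝ) ≤ N),
    orliczN φ μ (fun x => dSet nrm x (C : Set (Rd d)))

/-- `I`, the value of the point allocation problem. -/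
def pav {d : ℕ} (nrm : Rd d → ℝ) (φ : ℝ → ℝ) (μ : Measure (Rd d)) : ℝ≥0∞ :=
  ⨅ (ξ : Rd d → ℝ) (_ : ∀ x, 0 ≤ ξ x) (_ : Integrable ξ volume)
    (_ : ∫⁻ x, gq nrm φ (ξ x) ∂(muc μ) ≤ 1),
    ENNReal.ofReal (∫ x, ξ x)

/-- `ḡ(a) = inf_{η>0} [g(η) + aη]`. -/
def gbarq {d : ℕ} (nrm : Rd d → ℝ) (φ : ℝ → ℝ) (a : ℝ≥0∞) : ℝ≥0∞ :=
  ⨅ η ∈ Ioi (0:ℝ), (gq nrm φ η + a * ENNReal.ofReal η)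



namespace St10

def psi (φ : ℝ → ℝ) : ℝ → ℝ := fun u => φ (max u 0)

variable {φ : ℝ → ℝ}

lemma psi_mono (hφ : PhiOK φ) : Monotone (psi φ) := fun _ _ hab =>
  hφ.1 (mem_Ici.2 (le_max_right _ _)) (mem_Ici.2 (le_max_right _ _))
    (max_le_max hab le_rfl)

lemma psi_nonneg (hφ : PhiOK φ) (u : ℝ) : 0 ≤ psi φ u :=
  hφ.2.1 _ (le_max_right _ _)

lemma psi_eq {u : ℝ} (hu : 0 ≤ u) : psi φ u = φ u := by rw [psi, max_eq_left hu]

lemma sInf_abs_eq_infDist (C : Finset ℝ) (hC : C.Nonempty) (x : ℝ) :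
    sInf ((fun c => |x - c|) '' ↑C) = Metric.infDist x ↑C := by
  have himg : (fun c => |x - c|) '' ↑C = (dist x ·) '' ↑C := by
    simp [Real.dist_eq]
  rw [himg]
  apply le_antisymm
  · obtain ⟨c, hc, hdc⟩ :=
      C.finite_toSet.isCompact.exists_infDist_eq_dist hC.to_set x
    rw [hdc]
    exact csInf_le ⟨0, fun b ⟨c', _, hb⟩ => hb ▸ dist_nonneg⟩ ⟨c, hc, rfl⟩
  · exact le_csInf (hC.to_set.image _)
      (fun b ⟨c', hc', hb⟩ => hb ▸ Metric.infDist_le_dist_of_mem hc')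
lemma key_dom (hφ : PhiOK φ) {L : ℝ} (hL : 0 ≤ L) (C : Finset ℝ) (hC : C.Nonempty) :
    ∫⁻ x in Ico (0:ℝ) 1, ENNReal.ofReal (psi φ (L * x / (2 * C.card))) ≤
      ∫⁻ x in Ico (0:ℝ) 1, ENNReal.ofReal (psi φ (L * Metric.infDist x ↑C)) := by
  set n : ℕ := C.card with hn
  have hn1 : 1 ≤ n := Finset.card_pos.2 hC
  have hnR : (0:ℝ) < 2 * n := by positivity
  set μ : Measure ℝ := volume.restrict (Ico (0:ℝ) 1) with hμ
  have hμuniv : μ univ = 1 := by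
    simp [hμ, Measure.restrict_apply_univ, Real.volume_Ico]
  set G : ℝ → ℝ := fun x => psi φ (L * x / (2 * n)) with hG
  set F : ℝ → ℝ := fun x => psi φ (L * Metric.infDist x ↑C) with hF
  have hGmono : Monotone G := by
    intro a b hab
    exact psi_mono hφ (by gcongr : L * a / (2 * (n:ℝ)) ≤ L * b / (2 * (n:ℝ)))
  have hFmeas : Measurable F :=
    (psi_mono hφ).measurable.comp
      (continuous_const.mul (Metric.continuous_infDist_pt (↑C : Set ℝ))).measurable
  rw [lintegral_eq_lintegral_meas_lt μ
        (Eventually.of_forall fun x => psi_nonneg hφ _) (hGmono.measurable.aemeasurable),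
      lintegral_eq_lintegral_meas_lt μ
        (Eventually.of_forall fun x => psi_nonneg hφ _) hFmeas.aemeasurable]
  refine lintegral_mono fun t => ?_
  -- complement sets
  have hBmeas : MeasurableSet {x : ℝ | G x ≤ t} := measurableSet_le hGmono.measurable measurable_const
  have hAmeas : MeasurableSet {x : ℝ | F x ≤ t} := measurableSet_le hFmeas measurable_const
  have hμB_ne : μ {x : ℝ | G x ≤ t} ≠ ∞ :=
    ((measure_mono (subset_univ _)).trans_lt (hμuniv ▸ ENNReal.one_lt_top)).ne
  set b : ℝ := (μ {x : ℝ | G x ≤ t}).toReal with hb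
  have hb0 : 0 ≤ b := ENNReal.toReal_nonneg
  have hBb : ∀ x ∈ Ico (0:ℝ) 1, G x ≤ t → x ≤ b := by
    intro x hx hGx
    by_contra hxb
    push_neg at hxb
    have hsub : Ico (0:ℝ) x ⊆ {y : ℝ | G y ≤ t} := fun y hy =>
      le_trans (hGmono hy.2.le) hGx
    have hle : ENNReal.ofReal x ≤ μ {y : ℝ | G y ≤ t} := by
      have h1 : ENNReal.ofReal x = μ (Ico (0:ℝ) x) := by
        rw [hμ, Measure.restrict_apply measurableSet_Ico]
        rw [Set.Ico_inter_Ico]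
        simp only [max_self, min_eq_left hx.2.le]
        rw [Real.volume_Ico, sub_zero]
      rw [h1]
      exact measure_mono hsub
    have hxle : x ≤ b := by
      have h2 := ENNReal.toReal_mono hμB_ne hle
      rwa [ENNReal.toReal_ofReal hx.1] at h2
    exact absurd hxle (not_le.2 hxb)
  have hμG : μ {x : ℝ | G x ≤ t} = ENNReal.ofReal b := (ENNReal.ofReal_toReal hμB_ne).symm
  have hkey : μ {x : ℝ | F x ≤ t} ≤ ENNReal.ofReal b := by
    rcases lt_or_ge b 1 with hb1 | hb1
    · -- covering argument
      have hsub : Ico (0:ℝ) 1 ∩ {x : ℝ | F x ≤ t} ⊆ ⋃ c ∈ C, Metric.closedBall c (b / (2 * n)) := by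
        rintro x ⟨hx, hFx⟩
        have hDle : Metric.infDist x ↑C ≤ b / (2 * n) := by
          by_contra h
          push_neg at h
          have hbD : b < 2 * n * Metric.infDist x ↑C := by
            rw [div_lt_iff₀ hnR] at h
            linarith [h]
          obtain ⟨y, hy1, hy2⟩ := exists_between (lt_min hb1 hbD)
          have hyI : y ∈ Ico (0:ℝ) 1 := ⟨hb0.trans hy1.le, hy2.trans_le (min_le_left _ _)⟩
          have hGy : G y ≤ t := by
            refine le_trans ?_ hFx
            apply psi_mono hφ
            have hylt : y < 2 * n * Metric.infDist x ↑C := hy2.trans_le (min_le_right _ _)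
            rw [div_le_iff₀ hnR]
            calc L * y ≤ L * (2 * n * Metric.infDist x ↑C) := by
                  exact mul_le_mul_of_nonneg_left hylt.le hL
              _ = L * Metric.infDist x ↑C * (2 * n) := by ring
          exact absurd (hBb y hyI hGy) (not_le.2 hy1)
        obtain ⟨c, hc, hdc⟩ :=
          C.finite_toSet.isCompact.exists_infDist_eq_dist hC.to_set x
        refine Set.mem_biUnion hc ?_
        rw [Metric.mem_closedBall]
        rw [← hdc]
        exact hDle
      calc μ {x : ℝ | F x ≤ t} = volume (Ico (0:ℝ) 1 ∩ {x : ℝ | F x ≤ t}) := by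
            rw [hμ, Measure.restrict_apply hAmeas, Set.inter_comm]
        _ ≤ volume (⋃ c ∈ C, Metric.closedBall c (b / (2 * n))) := measure_mono hsub
        _ ≤ ∑ c ∈ C, volume (Metric.closedBall c (b / (2 * n))) := measure_biUnion_finset_le _ _
        _ = ∑ _c ∈ C, ENNReal.ofReal (2 * (b / (2 * n))) := by
            refine Finset.sum_congr rfl fun c _ => ?_
            rw [Real.volume_closedBall]
        _ = (n : ℝ≥0∞) * ENNReal.ofReal (2 * (b / (2 * n))) := by
            rw [Finset.sum_const, nsmul_eq_mul, hn]
        _ = ENNReal.ofReal ((n : ℝ) * (2 * (b / (2 * n)))) := by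
            rw [← ENNReal.ofReal_natCast n, ← ENNReal.ofReal_mul (Nat.cast_nonneg n)]
        _ = ENNReal.ofReal b := by
            congr 1
            field_simp
    · calc μ {x : ℝ | F x ≤ t} ≤ μ univ := measure_mono (subset_univ _)
        _ = 1 := hμuniv
        _ ≤ ENNReal.ofReal b := by
            rw [← ENNReal.ofReal_one]
            exact ENNReal.ofReal_le_ofReal hb1
  have hlt : ∀ f : ℝ → ℝ, {x : ℝ | t < f x} = {x : ℝ | f x ≤ t}ᶜ := by
    intro f; ext x; simp [not_le]
  rw [hlt G, hlt F, measure_compl hBmeas hμB_ne, measure_compl hAmeas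
      (((measure_mono (subset_univ _)).trans_lt (hμuniv ▸ ENNReal.one_lt_top)).ne), hμuniv]
  exact tsub_le_tsub_left (hkey.trans_eq hμG.symm) 1
lemma grid_eval (hφ : PhiOK φ) {η : ℝ} (hη : 0 < η) :
    ∫⁻ x in Ico (0:ℝ) 1, ENNReal.ofReal (psi φ (x / (2 * η))) =
      ENNReal.ofReal (2 * ∫ t in (0:ℝ)..(1/2 : ℝ), φ (t / η)) := by
  have h2η : (0:ℝ) < 2 * η := by positivity
  have hmono : Monotone fun x : ℝ => psi φ (x / (2 * η)) := fun a b hab =>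
    psi_mono hφ (by gcongr)
  have hint : IntegrableOn (fun x : ℝ => psi φ (x / (2 * η))) (Ico 0 1) volume :=
    ((hmono.monotoneOn _).integrableOn_isCompact isCompact_Icc).mono_set Ico_subset_Icc_self
  rw [← ofReal_integral_eq_lintegral_ofReal hint
    (Eventually.of_forall fun x => psi_nonneg hφ _)]
  congr 1
  have h1 : ∫ x in Ico (0:ℝ) 1, psi φ (x / (2 * η)) = ∫ x in (0:ℝ)..1, psi φ (x / (2 * η)) := by
    rw [intervalIntegral.integral_of_le zero_le_one,
      setIntegral_congr_set Ico_ae_eq_Ioc]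
  rw [h1, intervalIntegral.integral_comp_div (fun t => psi φ t) h2η.ne']
  have h2 : ∫ t in (0:ℝ)..(1/2 : ℝ), φ (t / η) = ∫ t in (0:ℝ)..(1/2 : ℝ), psi φ (t / η) := by
    refine intervalIntegral.integral_congr fun t ht => ?_
    rw [uIcc_of_le (by norm_num)] at ht
    exact (psi_eq (div_nonneg ht.1 hη.le)).symm
  rw [h2, intervalIntegral.integral_comp_div (fun t => psi φ t) hη.ne']
  have he1 : (0:ℝ) / (2 * η) = 0 := by ring
  have he2 : (1:ℝ) / (2 * η) = (1/2 : ℝ) / η := by ring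
  have he3 : (0:ℝ) / η = 0 := by ring
  rw [he1, he2, he3]
  rw [smul_eq_mul, smul_eq_mul]
  ring

lemma centered_eval (hφ : PhiOK φ) {η : ℝ} (hη : 0 < η) :
    ∫⁻ x in Ico (0:ℝ) 1, ENNReal.ofReal (φ (|x - 1/2| / η)) =
      ENNReal.ofReal (2 * ∫ t in (0:ℝ)..(1/2 : ℝ), φ (t / η)) := by
  set f : ℝ → ℝ := fun x => φ (|x - 1/2| / η) with hf
  have hnn : ∀ x, 0 ≤ f x := fun x => hφ.2.1 _ (by positivity)
  have hanti : AntitoneOn f (Icc (0:ℝ) (1/2)) := by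
    intro x hx y hy hxy
    apply hφ.1 (mem_Ici.2 (by positivity)) (mem_Ici.2 (by positivity))
    have hx2 : |x - 1/2| = 1/2 - x := by
      rw [abs_of_nonpos (by linarith [hx.2])]; ring
    have hy2 : |y - 1/2| = 1/2 - y := by
      rw [abs_of_nonpos (by linarith [hy.2])]; ring
    rw [hx2, hy2]
    gcongr
  have hmono2 : MonotoneOn f (Icc (1/2:ℝ) 1) := by
    intro x hx y hy hxy
    apply hφ.1 (mem_Ici.2 (by positivity)) (mem_Ici.2 (by positivity))
    have hx2 : |x - 1/2| = x - 1/2 := abs_of_nonneg (by linarith [hx.1])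
    have hy2 : |y - 1/2| = y - 1/2 := abs_of_nonneg (by linarith [hy.1])
    rw [hx2, hy2]
    gcongr
  have hi1 : IntervalIntegrable f volume 0 (1/2) := by
    apply AntitoneOn.intervalIntegrable
    rwa [uIcc_of_le (by norm_num)]
  have hi2 : IntervalIntegrable f volume (1/2) 1 := by
    apply MonotoneOn.intervalIntegrable
    rwa [uIcc_of_le (by norm_num)]
  have hint : IntegrableOn f (Ico 0 1) volume := by
    have h1 : IntegrableOn f (Icc (0:ℝ) (1/2)) volume :=
      AntitoneOn.integrableOn_isCompact isCompact_Icc hanti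
    have h2 : IntegrableOn f (Icc (1/2:ℝ) 1) volume :=
      hmono2.integrableOn_isCompact isCompact_Icc
    refine (h1.union h2).mono_set ?_
    rw [Set.Icc_union_Icc_eq_Icc (by norm_num) (by norm_num)]
    exact Ico_subset_Icc_self
  rw [← ofReal_integral_eq_lintegral_ofReal hint (Eventually.of_forall hnn)]
  congr 1
  have h1 : ∫ x in Ico (0:ℝ) 1, f x = ∫ x in (0:ℝ)..1, f x := by
    rw [intervalIntegral.integral_of_le zero_le_one,
      setIntegral_congr_set Ico_ae_eq_Ioc]
  rw [h1, ← intervalIntegral.integral_add_adjacent_intervals hi1 hi2]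
  have hA : ∫ x in (0:ℝ)..(1/2:ℝ), f x = ∫ t in (0:ℝ)..(1/2:ℝ), φ (t / η) := by
    have : ∫ x in (0:ℝ)..(1/2:ℝ), f x
        = ∫ x in (0:ℝ)..(1/2:ℝ), (fun u => φ (u / η)) (1/2 - x) := by
      refine intervalIntegral.integral_congr fun x hx => ?_
      rw [uIcc_of_le (by norm_num)] at hx
      have : |x - 1/2| = 1/2 - x := by
        rw [abs_of_nonpos (by linarith [hx.2])]; ring
      simp only [hf, this]
    rw [this, intervalIntegral.integral_comp_sub_left (fun u => φ (u / η)) (1/2)]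
    norm_num
  have hB : ∫ x in (1/2:ℝ)..1, f x = ∫ t in (0:ℝ)..(1/2:ℝ), φ (t / η) := by
    have : ∫ x in (1/2:ℝ)..1, f x
        = ∫ x in (1/2:ℝ)..1, (fun u => φ (u / η)) (x - 1/2) := by
      refine intervalIntegral.integral_congr fun x hx => ?_
      rw [uIcc_of_le (by norm_num)] at hx
      have : |x - 1/2| = x - 1/2 := abs_of_nonneg (by linarith [hx.1])
      simp only [hf, this]
    rw [this, intervalIntegral.integral_comp_sub_right (fun u => φ (u / η)) (1/2)]
    norm_num
  rw [hA, hB]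
  ring

lemma cube_transfer (h : ℝ → ℝ≥0∞) :
    ∫⁻ x in unitCube 1, h ((MeasurableEquiv.funUnique (Fin 1) ℝ) x) ∂volume
      = ∫⁻ u in Ico (0:ℝ) 1, h u := by
  have hpre : unitCube 1 = (MeasurableEquiv.funUnique (Fin 1) ℝ) ⁻¹' (Ico 0 1) := by
    ext x
    simp only [unitCube, Set.mem_univ_pi, Set.mem_preimage]
    constructor
    · intro hx; exact hx _
    · intro hx i
      have : i = (0 : Fin 1) := Subsingleton.elim _ _
      rw [this]
      exact hx
  rw [hpre]
  exact (volume_preserving_funUnique (Fin 1) ℝ).setLIntegral_comp_preimage_emb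
    (MeasurableEquiv.measurableEmbedding _) h _

lemma funUnique_apply (x : Rd 1) : (MeasurableEquiv.funUnique (Fin 1) ℝ) x = x 0 := rfl

lemma dSet_abs (x : Rd 1) (C : Finset (Rd 1)) (hC : C.Nonempty) :
    dSet (fun z : Rd 1 => |z 0|) x ↑C
      = Metric.infDist (x 0) ↑(C.image fun y => y 0) := by
  rw [dSet]
  have h1 : (fun y : Rd 1 => |(x - y) 0|) '' ↑C
      = (fun c : ℝ => |x 0 - c|) '' ((fun y : Rd 1 => y 0) '' ↑C) := by
    rw [Set.image_image]
    rfl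
  rw [h1, ← Finset.coe_image]
  exact sInf_abs_eq_infDist _ (hC.image _) (x 0)

lemma card_image0 (C : Finset (Rd 1)) : (C.image fun y => y 0).card = C.card :=
  Finset.card_image_of_injective _ (fun a b hab => funext fun i => by
    have hi : i = (0 : Fin 1) := Subsingleton.elim _ _
    rw [hi]; exact hab)

end St10

/-- In dimension `1` with the absolute value, `g(η) = 2 ∫_0^{1/2} φ(t/η) dt`. -/
theorem statement10 (φ : ℝ → ℝ) (hφ : PhiOK φ) (η : ℝ) (hη : 0 < η) :
    gq (fun x : Rd 1 => |x 0|) φ η =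
      ENNReal.ofReal (2 * ∫ t in (0:ℝ)..(1/2 : ℝ), φ (t / η)) := by
  classical
  open St10 in
  have hexp : (1 / ((1:ℕ):ℝ)) = (1:ℝ) := by norm_num
  rw [gq, if_pos hη]
  apply le_antisymm
  · -- upper bound, using N = 1 and the single midpoint codebook
    refine le_trans (iInf₂_le (1:ℝ) (self_mem_Ici)) ?_
    rw [fNq]
    set c0 : Rd 1 := fun _ => (1/2 : ℝ) with hc0
    refine le_trans (iInf_le _ ({c0} : Finset (Rd 1))) ?_
    refine le_trans (iInf_le _ (Finset.singleton_nonempty c0)) ?_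
    refine le_trans (iInf_le _ (by simp)) ?_
    have hd0 : ∀ x : Rd 1, dSet (fun z : Rd 1 => |z 0|) x ↑({c0} : Finset (Rd 1))
        = |x 0 - 1/2| := by
      intro x
      rw [St10.dSet_abs x _ (Finset.singleton_nonempty _)]
      rw [Finset.image_singleton, Finset.coe_singleton, Metric.infDist_singleton,
        Real.dist_eq]
    have hEq : ∫⁻ x in unitCube 1,
        ENNReal.ofReal (φ (((1:ℝ) / η) ^ (1 / ((1:ℕ):ℝ)) *
          dSet (fun z : Rd 1 => |z 0|) x ↑({c0} : Finset (Rd 1)))) ∂volume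
        = ENNReal.ofReal (2 * ∫ t in (0:ℝ)..(1/2 : ℝ), φ (t / η)) := by
      calc ∫⁻ x in unitCube 1,
            ENNReal.ofReal (φ (((1:ℝ) / η) ^ (1 / ((1:ℕ):ℝ)) *
              dSet (fun z : Rd 1 => |z 0|) x ↑({c0} : Finset (Rd 1)))) ∂volume
          = ∫⁻ x in unitCube 1,
              (fun u : ℝ => ENNReal.ofReal (φ (|u - 1/2| / η)))
                ((MeasurableEquiv.funUnique (Fin 1) ℝ) x) ∂volume := by
            refine lintegral_congr fun x => ?_
            rw [St10.funUnique_apply]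
            have harg : ((1:ℝ) / η) ^ (1 / ((1:ℕ):ℝ)) *
                dSet (fun z : Rd 1 => |z 0|) x ↑({c0} : Finset (Rd 1))
                = |x 0 - 1/2| / η := by
              rw [hexp, Real.rpow_one, hd0 x]; ring
            rw [harg]
        _ = ∫⁻ u in Ico (0:ℝ) 1, ENNReal.ofReal (φ (|u - 1/2| / η)) :=
            St10.cube_transfer (fun u => ENNReal.ofReal (φ (|u - 1/2| / η)))
        _ = ENNReal.ofReal (2 * ∫ t in (0:ℝ)..(1/2 : ℝ), φ (t / η)) :=
            St10.centered_eval hφ hη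
    exact le_of_eq hEq
  · -- lower bound
    refine le_iInf₂ fun N hN => ?_
    rw [fNq]
    refine le_iInf fun C => le_iInf fun hC => le_iInf fun hcard => ?_
    have hN1 : (1:ℝ) ≤ N := hN
    have hL0 : (0:ℝ) ≤ N / η := div_nonneg (by linarith) hη.le
    set C' : Finset ℝ := C.image fun y => y 0 with hC'def
    have hC' : C'.Nonempty := hC.image _
    have hcards : (C'.card : ℝ) ≤ N := by
      rw [hC'def, St10.card_image0]; exact hcard
    have hn1 : (1:ℝ) ≤ (C'.card : ℝ) := by
      exact_mod_cast Finset.card_pos.2 hC'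
    calc ENNReal.ofReal (2 * ∫ t in (0:ℝ)..(1/2 : ℝ), φ (t / η))
        = ∫⁻ u in Ico (0:ℝ) 1, ENNReal.ofReal (St10.psi φ (u / (2 * η))) :=
          (St10.grid_eval hφ hη).symm
      _ ≤ ∫⁻ u in Ico (0:ℝ) 1,
            ENNReal.ofReal (St10.psi φ ((N / η) * u / (2 * C'.card))) := by
          refine setLIntegral_mono
            (ENNReal.measurable_ofReal.comp ((St10.psi_mono hφ).measurable.comp
              ((measurable_id.const_mul (N/η)).div_const _))) fun u hu => ?_
          refine ENNReal.ofReal_le_ofReal (St10.psi_mono hφ ?_)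
          rw [div_le_div_iff₀ (by positivity) (by positivity)]
          have h1 : (C'.card : ℝ) * u ≤ N * u :=
            mul_le_mul_of_nonneg_right hcards hu.1
          have hη' : η ≠ 0 := hη.ne'
          have h2 : N / η * u * (2 * η) = 2 * (N * u) := by field_simp
          rw [h2]
          linarith
      _ ≤ ∫⁻ u in Ico (0:ℝ) 1,
            ENNReal.ofReal (St10.psi φ ((N / η) * Metric.infDist u ↑C')) :=
          St10.key_dom hφ hL0 C' hC'
      _ = ∫⁻ u in Ico (0:ℝ) 1,
            (fun u : ℝ => ENNReal.ofReal (φ ((N / η) * Metric.infDist u ↑C'))) u := by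
          refine lintegral_congr fun u => ?_
          rw [St10.psi_eq (mul_nonneg hL0 Metric.infDist_nonneg)]
      _ = ∫⁻ x in unitCube 1,
            (fun u : ℝ => ENNReal.ofReal (φ ((N / η) * Metric.infDist u ↑C')))
              ((MeasurableEquiv.funUnique (Fin 1) ℝ) x) ∂volume :=
          (St10.cube_transfer
            (fun u : ℝ => ENNReal.ofReal (φ ((N / η) * Metric.infDist u ↑C')))).symm
      _ = ∫⁻ x in unitCube 1,
            ENNReal.ofReal (φ ((N / η) ^ (1 / ((1:ℕ):ℝ)) *
              dSet (fun z : Rd 1 => |z 0|) x ↑C)) ∂volume := by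
          refine lintegral_congr fun x => ?_
          rw [St10.funUnique_apply]
          congr 2
          rw [hexp, Real.rpow_one, St10.dSet_abs x C hC]

end
end

section
/- Assume I ∈ (0,∞) and that g is strictly convex on (0,∞). Then ḡ is differentiable on (0,∞) with ḡ'(a) = inf{b > 0 : −g'_+(b) ≤ a}, and any two optimal point densities agree λ^d-almost everywhere. -/
open MeasureTheory Filter Set
open scoped ENNReal NNReal

noncomputable section

/-- `ḡ` as a real function of a real argument. -/
def gbarR {d : ℕ} (nrm : Rd d → ℝ) (φ : ℝ → ℝ) (a : ℝ) : ℝ :=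
  (gbarq nrm φ (ENNReal.ofReal a)).toReal

/-- right derivative -/
def rightD (f : ℝ → ℝ) (a : ℝ) : ℝ := derivWithin f (Ioi a) a

/-- left derivative -/
def leftD (f : ℝ → ℝ) (a : ℝ) : ℝ := derivWithin f (Iio a) a

/-- the expression `(1/κ)(∫ ḡ(κ/h) dμ_c - 1)` appearing in the dual formula. -/
def dualExpr {d : ℕ} (nrm : Rd d → ℝ) (φ : ℝ → ℝ) (μ : Measure (Rd d)) (κ : ℝ) : ℝ≥0∞ :=
  (ENNReal.ofReal κ)⁻¹ *
    ((∫⁻ x, gbarq nrm φ (ENNReal.ofReal κ / μ.rnDeriv volume x) ∂(muc μ)) - 1)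


section PAauxsec
open Topology
namespace PAaux


variable {h : ℝ → ℝ}

lemma slope_eq (f : ℝ → ℝ) (a b : ℝ) : slope f a b = (f b - f a) / (b - a) := by
  exact slope_def_field f a b

lemma rightD_eq (hcv : ConvexOn ℝ (Ioi 0) h) {b : ℝ} (hb : 0 < b) :
    HasDerivWithinAt h (rightD h b) (Ioi b) b ∧
      rightD h b = sInf (slope h b '' Ioi b) := by
  have hmem : ∀ {y : ℝ}, y ∈ Ioi b → y ∈ Ioi (0:ℝ) := fun hy => lt_trans hb hy
  have hb2 : b / 2 ∈ Ioi (0:ℝ) := by simpa using half_pos hb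
  have hb2b : b / 2 < b := half_lt_self hb
  have mono : MonotoneOn (slope h b) (Ioi b) := by
    intro x hx y hy hxy
    rw [slope_eq, slope_eq]
    exact hcv.secant_mono (mem_Ioi.2 hb) (hmem hx) (hmem hy)
      (ne_of_gt hx) (ne_of_gt hy) hxy
  have bdd : BddBelow (slope h b '' Ioi b) := by
    refine ⟨slope h b (b/2), ?_⟩
    rintro s ⟨y, hy, rfl⟩
    rw [slope_eq, slope_eq]
    exact hcv.secant_mono (mem_Ioi.2 hb) hb2 (hmem hy)
      (ne_of_lt hb2b) (ne_of_gt hy) (le_of_lt (lt_trans hb2b hy))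
  have htd : Tendsto (slope h b) (𝓝[>] b) (𝓝 (sInf (slope h b '' Ioi b))) :=
    mono.tendsto_nhdsGT bdd
  have hd : HasDerivWithinAt h (sInf (slope h b '' Ioi b)) (Ioi b) b := by
    rw [hasDerivWithinAt_iff_tendsto_slope]
    have : Ioi b \ {b} = Ioi b := by
      ext x; simp only [mem_diff, mem_Ioi, mem_singleton_iff]
      exact ⟨fun h => h.1, fun h => ⟨h, ne_of_gt h⟩⟩
    rwa [this]
  have hder : rightD h b = sInf (slope h b '' Ioi b) :=
    hd.derivWithin (uniqueDiffWithinAt_Ioi b)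
  exact ⟨hder ▸ hd, hder⟩

lemma rightD_le_slope (hcv : ConvexOn ℝ (Ioi 0) h) {b y : ℝ} (hb : 0 < b) (hy : b < y) :
    rightD h b ≤ (h y - h b) / (y - b) := by
  rw [(rightD_eq hcv hb).2]
  have : slope h b y = (h y - h b) / (y - b) := slope_eq h b y
  exact this ▸ csInf_le (by
    refine ⟨slope h b (b/2), ?_⟩
    rintro s ⟨z, hz, rfl⟩
    rw [slope_eq, slope_eq]
    exact hcv.secant_mono (mem_Ioi.2 hb) (by simpa using half_pos hb)
      (lt_trans hb hz) (ne_of_lt (half_lt_self hb)) (ne_of_gt hz)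
      (le_of_lt (lt_trans (half_lt_self hb) hz))) ⟨y, hy, rfl⟩

lemma slope_le_rightD (hcv : ConvexOn ℝ (Ioi 0) h) {x b : ℝ} (hx : 0 < x) (hxb : x < b) :
    (h b - h x) / (b - x) ≤ rightD h b := by
  have hb : 0 < b := lt_trans hx hxb
  rw [(rightD_eq hcv hb).2]
  refine le_csInf ⟨slope h b (b+1), ⟨b+1, by simp, rfl⟩⟩ ?_
  rintro s ⟨y, hy, rfl⟩
  rw [slope_eq]
  have := hcv.secant_mono (mem_Ioi.2 hb) (mem_Ioi.2 hx)
    (mem_Ioi.2 (lt_trans hb hy)) (ne_of_lt hxb) (ne_of_gt hy) (le_of_lt (lt_trans hxb hy))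
  calc (h b - h x) / (b - x) = (h x - h b) / (x - b) := by rw [← neg_div_neg_eq]; ring_nf
    _ ≤ (h y - h b) / (y - b) := this

lemma rightD_strictMono (hsc : StrictConvexOn ℝ (Ioi 0) h) {x y : ℝ}
    (hx : 0 < x) (hxy : x < y) : rightD h x < rightD h y := by
  have hcv := hsc.convexOn
  have hy : 0 < y := lt_trans hx hxy
  set m := (x + y) / 2 with hm
  have hxm : x < m := by rw [hm]; linarith
  have hmy : m < y := by rw [hm]; linarith
  have h1 : rightD h x ≤ (h m - h x) / (m - x) := rightD_le_slope hcv hx hxm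
  have h2 : (h y - h m) / (y - m) ≤ rightD h y :=
    slope_le_rightD hcv (lt_trans hx hxm) hmy
  have h3 : (h m - h x) / (m - x) < (h y - h m) / (y - m) :=
    hsc.slope_strict_mono_adjacent (mem_Ioi.2 hx) (mem_Ioi.2 hy) hxm hmy
  linarith

lemma rightD_mono (hsc : StrictConvexOn ℝ (Ioi 0) h) {x y : ℝ}
    (hx : 0 < x) (hxy : x ≤ y) : rightD h x ≤ rightD h y := by
  rcases eq_or_lt_of_le hxy with rfl | hlt
  · exact le_rfl
  · exact (rightD_strictMono hsc hx hlt).le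



/-- the candidate derivative set -/
def Dset (h : ℝ → ℝ) (a : ℝ) : Set ℝ := {b : ℝ | 0 < b ∧ -(rightD h b) ≤ a}

/-- the candidate derivative -/
def DD (h : ℝ → ℝ) (a : ℝ) : ℝ := sInf (Dset h a)

/-- the real dual function -/
def gb (h : ℝ → ℝ) (a : ℝ) : ℝ := sInf ((fun η => h η + a * η) '' Ioi 0)

variable (hsc : StrictConvexOn ℝ (Ioi 0) h) (h0 : ∀ η : ℝ, 0 < η → 0 ≤ h η)

section
include hsc h0

lemma Dset_nonempty {a : ℝ} (ha : 0 < a) : (Dset h a).Nonempty := by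
  refine ⟨2 + h 1 / a, ?_, ?_⟩
  · have : 0 ≤ h 1 / a := div_nonneg (h0 1 one_pos) ha.le
    linarith
  · set b := 2 + h 1 / a with hbdef
    have h1a : 0 ≤ h 1 / a := div_nonneg (h0 1 one_pos) ha.le
    have hb1 : (1:ℝ) < b := by rw [hbdef]; linarith
    have hs : (h b - h 1) / (b - 1) ≤ rightD h b :=
      slope_le_rightD hsc.convexOn one_pos hb1
    have hb0 : 0 ≤ h b := h0 b (by linarith)
    have key : -a ≤ (h b - h 1) / (b - 1) := by
      rw [le_div_iff₀ (by linarith : (0:ℝ) < b - 1)]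
      have : b - 1 = 1 + h 1 / a := by rw [hbdef]; ring
      rw [this]
      have : -a * (1 + h 1 / a) = -a - h 1 := by field_simp; ring
      rw [this]; linarith
    linarith

lemma Dset_bddBelow (a : ℝ) : BddBelow (Dset h a) := ⟨0, fun b hb => hb.1.le⟩

omit hsc h0 in
lemma DD_nonneg' (hne : (Dset h a).Nonempty) : 0 ≤ DD h a :=
  le_csInf hne fun b hb => hb.1.le

lemma DD_nonneg {a : ℝ} (ha : 0 < a) : 0 ≤ DD h a :=
  le_csInf (Dset_nonempty hsc h0 ha) fun b hb => hb.1.le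

lemma rD_ge {a b : ℝ} (ha : 0 < a) (hb : 0 < b) (hlt : DD h a < b) : -(rightD h b) ≤ a := by
  obtain ⟨b', hb', hb'b⟩ := (csInf_lt_iff (Dset_bddBelow hsc h0 a) (Dset_nonempty hsc h0 ha)).1 hlt
  have := rightD_mono hsc hb'.1 hb'b.le
  linarith [hb'.2]

lemma rD_lt {a b : ℝ} (hb : 0 < b) (hlt : b < DD h a) : rightD h b < -a := by
  have : b ∉ Dset h a := fun hmem => absurd (csInf_le (Dset_bddBelow hsc h0 a) hmem) (not_le.2 hlt)
  have h2 : ¬(-(rightD h b) ≤ a) := fun hc => this ⟨hb, hc⟩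
  linarith [not_le.1 h2]

lemma psi_mono {a x y : ℝ} (ha : 0 < a) (hDx : DD h a < x) (hx : 0 < x) (hxy : x < y) :
    h x + a * x ≤ h y + a * y := by
  have h1 : rightD h x ≤ (h y - h x) / (y - x) := rightD_le_slope hsc.convexOn hx hxy
  have h2 : -(rightD h x) ≤ a := rD_ge hsc h0 ha hx hDx
  have h3 : (h y - h x) ≥ rightD h x * (y - x) := by
    rw [ge_iff_le, ← le_div_iff₀ (by linarith : (0:ℝ) < y - x)]; exact h1
  nlinarith

lemma psi_anti {a x y : ℝ} (hx : 0 < x) (hxy : x < y) (hyD : y < DD h a) :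
    h y + a * y ≤ h x + a * x := by
  have h1 : (h y - h x) / (y - x) ≤ rightD h y := slope_le_rightD hsc.convexOn hx hxy
  have h2 : rightD h y < -a := rD_lt hsc h0 (lt_trans hx hxy) hyD
  have h3 : h y - h x ≤ rightD h y * (y - x) := by
    rw [← div_le_iff₀ (by linarith : (0:ℝ) < y - x)] ; exact h1
  nlinarith

end

section gb
include h0

omit h0 in
lemma gb_nonempty (a : ℝ) : ((fun η => h η + a * η) '' Ioi 0).Nonempty :=
  ⟨h 1 + a * 1, 1, mem_Ioi.2 one_pos, rfl⟩

lemma gb_bddBelow {a : ℝ} (ha : 0 ≤ a) : BddBelow ((fun η => h η + a * η) '' Ioi 0) := by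
  refine ⟨0, ?_⟩
  rintro s ⟨η, hη, rfl⟩
  exact add_nonneg (h0 η hη) (mul_nonneg ha (le_of_lt hη))

lemma gb_le {a η : ℝ} (ha : 0 ≤ a) (hη : 0 < η) : gb h a ≤ h η + a * η :=
  csInf_le (gb_bddBelow h0 ha) ⟨η, hη, rfl⟩

omit h0 in
lemma le_gb {a c : ℝ} (hc : ∀ η : ℝ, 0 < η → c ≤ h η + a * η) : c ≤ gb h a :=
  le_csInf (gb_nonempty a) (by rintro s ⟨η, hη, rfl⟩; exact hc η hη)

end gb

include hsc h0

lemma gb_upper {a a' : ℝ} (ha : 0 < a) (haa : a < a') :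
    gb h a' ≤ gb h a + (a' - a) * DD h a := by
  refine le_of_forall_pos_le_add ?_
  intro ε hε
  set δ := ε / (2 * (a' - a)) with hδdef
  have hδ : 0 < δ := div_pos hε (by linarith)
  have : gb h a < gb h a + ε / 2 := by linarith
  obtain ⟨s, ⟨η, hη, rfl⟩, hlt⟩ :=
    (csInf_lt_iff (gb_bddBelow h0 ha.le) (gb_nonempty a)).1 this
  have hD0 : 0 ≤ DD h a := DD_nonneg hsc h0 ha
  set η' := min η (DD h a + δ) with hη'def
  have hη' : 0 < η' := lt_min hη (by linarith)
  have key : h η' + a * η' ≤ h η + a * η := by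
    rcases le_or_gt η (DD h a + δ) with hle | hgt
    · have : η' = η := min_eq_left hle
      rw [this]
    · have : η' = DD h a + δ := min_eq_right hgt.le
      rw [this]
      exact psi_mono hsc h0 ha (by linarith) (by linarith) hgt
  have hgb' : gb h a' ≤ h η' + a' * η' := gb_le h0 (by linarith) hη'
  have hη'le : η' ≤ DD h a + δ := min_le_right _ _
  have expand : h η' + a' * η' = (h η' + a * η') + (a' - a) * η' := by ring
  have : gb h a' ≤ gb h a + ε / 2 + (a' - a) * (DD h a + δ) := by
    calc gb h a' ≤ (h η' + a * η') + (a' - a) * η' := by rw [← expand]; exact hgb'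
      _ ≤ (h η + a * η) + (a' - a) * (DD h a + δ) := by
          have : (a' - a) * η' ≤ (a' - a) * (DD h a + δ) :=
            mul_le_mul_of_nonneg_left hη'le (by linarith)
          linarith
      _ ≤ gb h a + ε / 2 + (a' - a) * (DD h a + δ) := by linarith
  have hne : a' - a ≠ 0 := ne_of_gt (by linarith)
  have hcalc : (a' - a) * δ = ε / 2 := by
    rw [hδdef]; field_simp
  nlinarith [this]

lemma gb_lower {a a' : ℝ} (ha : 0 < a) (haa : a < a') :
    gb h a + (a' - a) * DD h a' ≤ gb h a' := by
  have ha' : 0 < a' := lt_trans ha haa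
  have key : ∀ δ : ℝ, 0 < δ → gb h a + (a' - a) * (DD h a' - δ) ≤ gb h a' := by
    intro δ hδ
    refine le_gb ?_
    intro η hη
    rcases le_or_gt (DD h a' - δ) η with hcase | hcase
    · have h1 : gb h a ≤ h η + a * η := gb_le h0 ha.le hη
      have h2 : (a' - a) * (DD h a' - δ) ≤ (a' - a) * η :=
        mul_le_mul_of_nonneg_left hcase (by linarith)
      nlinarith
    · set s := DD h a' - δ with hsdef
      have hs : 0 < s := lt_trans hη hcase
      have hanti : h s + a' * s ≤ h η + a' * η :=
        psi_anti hsc h0 hη hcase (by rw [hsdef]; linarith)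
      have h1 : gb h a ≤ h s + a * s := gb_le h0 ha.le hs
      nlinarith
  refine le_of_forall_pos_le_add ?_
  intro ε hε
  have := key (ε / (a' - a)) (div_pos hε (by linarith))
  have hne : a' - a ≠ 0 := ne_of_gt (by linarith)
  have hc : (a' - a) * (ε / (a' - a)) = ε := by field_simp
  nlinarith [this]

lemma DD_anti {a a' : ℝ} (ha : 0 < a) (haa : a ≤ a') : DD h a' ≤ DD h a := by
  refine csInf_le_csInf (Dset_bddBelow hsc h0 a') (Dset_nonempty hsc h0 ha) ?_
  intro b hb
  exact ⟨hb.1, le_trans hb.2 haa⟩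

lemma DD_contR {a ε : ℝ} (ha : 0 < a) (hε : 0 < ε) :
    ∃ a' : ℝ, a < a' ∧ DD h a - ε ≤ DD h a' := by
  by_cases hD : DD h a ≤ ε
  · exact ⟨a + 1, by linarith, le_trans (by linarith) (DD_nonneg hsc h0 (by linarith))⟩
  · push_neg at hD
    by_contra hcon
    push_neg at hcon
    set b := DD h a - ε / 2 with hbdef
    have hb : 0 < b := by rw [hbdef]; linarith
    have key : ∀ a' : ℝ, a < a' → -(rightD h b) ≤ a' := by
      intro a' ha'
      have h1 : DD h a' < DD h a - ε := hcon a' ha'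
      exact rD_ge hsc h0 (lt_trans ha ha') hb (by rw [hbdef]; linarith)
    have hle : -(rightD h b) ≤ a := by
      by_contra hc
      push_neg at hc
      have := key ((a + -(rightD h b)) / 2) (by linarith)
      linarith
    have : DD h a ≤ b := csInf_le (Dset_bddBelow hsc h0 a) ⟨hb, hle⟩
    rw [hbdef] at this; linarith

lemma DD_contL {a ε : ℝ} (ha : 0 < a) (hε : 0 < ε) :
    ∃ a'' : ℝ, 0 < a'' ∧ a'' < a ∧ DD h a'' ≤ DD h a + ε := by
  by_contra hcon
  push_neg at hcon
  set b₂ := DD h a + ε with hb₂def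
  set b₁ := DD h a + ε / 2 with hb₁def
  have hD0 : 0 ≤ DD h a := DD_nonneg hsc h0 ha
  have hb₁ : 0 < b₁ := by rw [hb₁def]; linarith
  have hb₂ : 0 < b₂ := by rw [hb₂def]; linarith
  have hb₁₂ : b₁ < b₂ := by rw [hb₁def, hb₂def]; linarith
  have key : ∀ a'' : ℝ, 0 < a'' → a'' < a → rightD h b₂ < -a'' := by
    intro a'' h1 h2
    exact rD_lt hsc h0 hb₂ (by have := hcon a'' h1 h2; rw [hb₂def]; linarith)
  have h2 : rightD h b₂ ≤ -a := by
    by_contra hc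
    push_neg at hc
    set m := max (-(rightD h b₂)) 0 with hmdef
    have hm0 : 0 ≤ m := le_max_right _ _
    have hma : m < a := max_lt (by linarith) ha
    set a'' := (m + a) / 2 with ha''def
    have h3 : 0 < a'' := by rw [ha''def]; linarith
    have h4 : a'' < a := by rw [ha''def]; linarith
    have h5 : -(rightD h b₂) ≤ m := le_max_left _ _
    have := key a'' h3 h4
    rw [ha''def] at this
    linarith
  have h1 : -(rightD h b₁) ≤ a := rD_ge hsc h0 ha hb₁ (by rw [hb₁def]; linarith)
  have := rightD_strictMono hsc hb₁ hb₁₂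
  linarith

lemma DD_cont {a : ℝ} (ha : 0 < a) : Tendsto (DD h) (𝓝 a) (𝓝 (DD h a)) := by
  rw [tendsto_order]
  constructor
  · intro l hl
    obtain ⟨a', ha', hDa'⟩ := DD_contR hsc h0 ha (by linarith : (0:ℝ) < (DD h a - l) / 2)
    have hmem : Ioo (0:ℝ) a' ∈ 𝓝 a := Ioo_mem_nhds ha ha'
    filter_upwards [hmem] with x hx
    have : DD h a' ≤ DD h x := DD_anti hsc h0 hx.1 hx.2.le
    linarith
  · intro u hu
    obtain ⟨a'', h1, h2, h3⟩ := DD_contL hsc h0 ha (by linarith : (0:ℝ) < (u - DD h a) / 2)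
    have hmem : Ioi a'' ∈ 𝓝 a := Ioi_mem_nhds h2
    filter_upwards [hmem] with x hx
    have : DD h x ≤ DD h a'' := DD_anti hsc h0 h1 (le_of_lt hx)
    linarith

theorem gb_hasDerivAt {a : ℝ} (ha : 0 < a) : HasDerivAt (gb h) (DD h a) a := by
  rw [hasDerivAt_iff_tendsto_slope]
  have hev : ∀ᶠ x in 𝓝[≠] a, dist (slope (gb h) a x) (DD h a) ≤ dist (DD h x) (DD h a) := by
    have hmem : Ioo (a/2) (a + a) ∈ 𝓝 a := Ioo_mem_nhds (by linarith) (by linarith)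
    filter_upwards [nhdsWithin_le_nhds hmem, self_mem_nhdsWithin] with x hx (hxa : x ≠ a)
    have hx0 : 0 < x := lt_trans (by linarith) hx.1
    rcases lt_or_gt_of_ne hxa with hlt | hgt
    · -- x < a
      have hup : gb h a ≤ gb h x + (a - x) * DD h x := by
        have := gb_upper hsc h0 hx0 hlt; linarith
      have hlo : gb h x + (a - x) * DD h a ≤ gb h a := gb_lower hsc h0 hx0 hlt
      have hs : slope (gb h) a x = (gb h a - gb h x) / (a - x) := by
        rw [slope_def_field, ← neg_div_neg_eq]; ring_nf
      have hd : 0 < a - x := by linarith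
      have hb1 : DD h a ≤ (gb h a - gb h x) / (a - x) := by
        rw [le_div_iff₀ hd]; linarith
      have hb2 : (gb h a - gb h x) / (a - x) ≤ DD h x := by
        rw [div_le_iff₀ hd]; linarith
      rw [hs, Real.dist_eq, Real.dist_eq]
      have hDx : DD h a ≤ DD h x := DD_anti hsc h0 hx0 hlt.le
      have habs : |(gb h a - gb h x) / (a - x) - DD h a| ≤ DD h x - DD h a :=
        abs_le.2 ⟨by linarith, by linarith⟩
      exact le_trans habs (le_abs_self _)
    · -- a < x
      have hup : gb h x ≤ gb h a + (x - a) * DD h a := gb_upper hsc h0 ha hgt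
      have hlo : gb h a + (x - a) * DD h x ≤ gb h x := gb_lower hsc h0 ha hgt
      have hs : slope (gb h) a x = (gb h x - gb h a) / (x - a) := slope_def_field _ _ _
      have hd : 0 < x - a := by linarith
      have hb1 : DD h x ≤ (gb h x - gb h a) / (x - a) := by
        rw [le_div_iff₀ hd]; linarith
      have hb2 : (gb h x - gb h a) / (x - a) ≤ DD h a := by
        rw [div_le_iff₀ hd]; linarith
      rw [hs, Real.dist_eq, Real.dist_eq]
      have hDx : DD h x ≤ DD h a := DD_anti hsc h0 ha hgt.le
      have habs : |(gb h x - gb h a) / (x - a) - DD h a| ≤ -(DD h x - DD h a) :=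
        abs_le.2 ⟨by linarith, by linarith⟩
      exact le_trans habs (neg_le_abs _)
  have htd : Tendsto (fun x => dist (DD h x) (DD h a)) (𝓝[≠] a) (𝓝 0) := by
    have := (DD_cont hsc h0 ha).mono_left (nhdsWithin_le_nhds (s := {a}ᶜ))
    exact tendsto_iff_dist_tendsto_zero.1 this
  rw [tendsto_iff_dist_tendsto_zero]
  exact squeeze_zero' (Eventually.of_forall fun x => dist_nonneg) hev htd


end PAaux
end PAauxsec


section PAauxC
open Topology
namespace PAaux

variable {d : ℕ} {nrm : Rd d → ℝ} {φ : ℝ → ℝ}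

lemma nrm_zero (hnrm : IsNorm nrm) : nrm 0 = 0 := (hnrm.2.1 0).2 rfl

lemma nrm_sum_le (hnrm : IsNorm nrm) (s : Finset (Fin d)) (v : Fin d → Rd d) :
    nrm (∑ i ∈ s, v i) ≤ ∑ i ∈ s, nrm (v i) := by
  classical
  induction s using Finset.induction_on with
  | empty => simp [nrm_zero hnrm]
  | insert _ _ hnot ih =>
    rw [Finset.sum_insert hnot, Finset.sum_insert hnot]
    exact le_trans (hnrm.2.2.2 _ _) (by linarith)

/-- bound for the norm on the unit cube -/
def nrmB (nrm : Rd d → ℝ) : ℝ := ∑ i : Fin d, nrm (Pi.single i 1)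

lemma nrmB_nonneg (hnrm : IsNorm nrm) : 0 ≤ nrmB nrm :=
  Finset.sum_nonneg fun i _ => hnrm.1 _

lemma nrm_le_nrmB (hnrm : IsNorm nrm) {x : Rd d} (hx : x ∈ unitCube d) :
    nrm x ≤ nrmB nrm := by
  have hsingle : ∀ i : Fin d, Pi.single i (x i) = x i • (Pi.single i 1 : Rd d) := by
    intro i; funext j
    by_cases hji : j = i <;> simp [Pi.single_apply, hji]
  have h1 := nrm_sum_le hnrm Finset.univ (fun i => Pi.single i (x i))
  rw [Finset.univ_sum_single] at h1
  calc nrm x ≤ ∑ i : Fin d, nrm (Pi.single i (x i)) := h1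
    _ ≤ nrmB nrm := by
        refine Finset.sum_le_sum fun i _ => ?_
        rw [hsingle i, hnrm.2.2.1]
        have hxi : x i ∈ Ico (0:ℝ) 1 := by
          have := hx i (Set.mem_univ i); simpa [unitCube] using this
        have : |x i| ≤ 1 := by
          rw [abs_of_nonneg hxi.1]; exact hxi.2.le
        nlinarith [hnrm.1 (Pi.single i 1 : Rd d), abs_nonneg (x i)]

lemma volume_unitCube : volume (unitCube d) = 1 := by
  rw [unitCube, volume_pi_pi]
  simp [Real.volume_Ico]

lemma dSet_nonneg (hnrm : IsNorm nrm) (x : Rd d) (A : Set (Rd d)) : 0 ≤ dSet nrm x A :=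
  Real.sInf_nonneg (by rintro r ⟨y, _, rfl⟩; exact hnrm.1 _)

lemma dSet_zero_singleton (x : Rd d) : dSet nrm x ({(0 : Rd d)} : Set (Rd d)) = nrm x := by
  rw [dSet, Set.image_singleton, csInf_singleton, sub_zero]

lemma gq_ne_top (hnrm : IsNorm nrm) (hφ : PhiOK φ) {η : ℝ} (hη : 0 < η) :
    gq nrm φ η ≠ ⊤ := by
  set s := ((1:ℝ) / η) ^ (1 / (d:ℝ)) with hsdef
  have hs0 : 0 ≤ s := Real.rpow_nonneg (by positivity) _
  have h1 : gq nrm φ η ≤ fNq nrm φ 1 η := by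
    rw [gq, if_pos hη]
    exact iInf₂_le 1 self_mem_Ici
  have h2 : fNq nrm φ 1 η ≤
      ∫⁻ x in unitCube d, ENNReal.ofReal (φ (s * dSet nrm x (({0} : Finset (Rd d)) : Set (Rd d)))) ∂volume := by
    rw [fNq]
    exact iInf_le_of_le {0} (iInf_le_of_le ⟨0, Finset.mem_singleton_self 0⟩
      (iInf_le_of_le (by simp) le_rfl))
  have h3 : (∫⁻ x in unitCube d,
      ENNReal.ofReal (φ (s * dSet nrm x (({0} : Finset (Rd d)) : Set (Rd d)))) ∂volume)
      ≤ ENNReal.ofReal (φ (s * nrmB nrm)) := by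
    have hb : ∀ x ∈ unitCube d,
        ENNReal.ofReal (φ (s * dSet nrm x (({0} : Finset (Rd d)) : Set (Rd d))))
          ≤ ENNReal.ofReal (φ (s * nrmB nrm)) := by
      intro x hx
      apply ENNReal.ofReal_le_ofReal
      have hd0 : dSet nrm x (({0} : Finset (Rd d)) : Set (Rd d)) = nrm x := by
        rw [Finset.coe_singleton]; exact dSet_zero_singleton x
      rw [hd0]
      exact hφ.1 (mul_nonneg hs0 (hnrm.1 x)) (mul_nonneg hs0 (nrmB_nonneg hnrm))
        (mul_le_mul_of_nonneg_left (nrm_le_nrmB hnrm hx) hs0)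
    calc (∫⁻ x in unitCube d, ENNReal.ofReal (φ (s * dSet nrm x (({0} : Finset (Rd d)) : Set (Rd d)))) ∂volume)
        ≤ ∫⁻ _ in unitCube d, ENNReal.ofReal (φ (s * nrmB nrm)) ∂volume :=
          setLIntegral_mono measurable_const hb
      _ = ENNReal.ofReal (φ (s * nrmB nrm)) := by
          rw [setLIntegral_const, volume_unitCube, mul_one]
  exact ne_top_of_le_ne_top ENNReal.ofReal_ne_top (le_trans h1 (le_trans h2 h3))

lemma fNq_anti (hnrm : IsNorm nrm) (hφ : PhiOK φ) {N η η' : ℝ} (hN : 1 ≤ N)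
    (hη : 0 < η) (hηη' : η ≤ η') : fNq nrm φ N η' ≤ fNq nrm φ N η := by
  rw [fNq, fNq]
  refine iInf_mono fun C => iInf_mono fun hC => iInf_mono fun hcard => ?_
  refine lintegral_mono fun x => ?_
  apply ENNReal.ofReal_le_ofReal
  have hds : 0 ≤ dSet nrm x (C : Set (Rd d)) := dSet_nonneg hnrm x _
  have hN0 : 0 ≤ N := le_trans zero_le_one hN
  have hη' : 0 < η' := lt_of_lt_of_le hη hηη'
  have hdiv : N / η' ≤ N / η := div_le_div_of_nonneg_left hN0 hη hηη'
  have hr : (N / η') ^ (1 / (d:ℝ)) ≤ (N / η) ^ (1 / (d:ℝ)) :=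
    Real.rpow_le_rpow (div_nonneg hN0 hη'.le) hdiv (by positivity)
  have hr0 : 0 ≤ (N / η') ^ (1 / (d:ℝ)) := Real.rpow_nonneg (div_nonneg hN0 hη'.le) _
  exact hφ.1 (mul_nonneg hr0 hds)
    (mul_nonneg (le_trans hr0 hr) hds)
    (mul_le_mul_of_nonneg_right hr hds)

lemma gq_anti (hnrm : IsNorm nrm) (hφ : PhiOK φ) : Antitone (gq nrm φ) := by
  have key : ∀ {η η' : ℝ}, 0 < η → η ≤ η' → gq nrm φ η' ≤ gq nrm φ η := by
    intro η η' hη hηη'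
    have e1 : gq nrm φ η = ⨅ N ∈ Ici (1:ℝ), fNq nrm φ N η := if_pos hη
    have e2 : gq nrm φ η' = ⨅ N ∈ Ici (1:ℝ), fNq nrm φ N η' := if_pos (lt_of_lt_of_le hη hηη')
    rw [e1, e2]
    exact iInf_mono fun N => iInf_mono fun hN => fNq_anti hnrm hφ hN hη hηη'
  intro x y hxy
  rcases lt_or_ge 0 x with hx | hx
  · exact key hx hxy
  · have e1 : gq nrm φ x = ⨆ η' ∈ Ioi (0:ℝ), ⨅ N ∈ Ici (1:ℝ), fNq nrm φ N η' :=
      if_neg (not_lt.2 hx)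
    rcases lt_or_ge 0 y with hy | hy
    · have e2 : gq nrm φ y = ⨅ N ∈ Ici (1:ℝ), fNq nrm φ N y := if_pos hy
      rw [e1, e2]
      exact le_iSup₂ (f := fun η' (_ : η' ∈ Ioi (0:ℝ)) => ⨅ N ∈ Ici (1:ℝ), fNq nrm φ N η') y hy
    · have e2 : gq nrm φ y = ⨆ η' ∈ Ioi (0:ℝ), ⨅ N ∈ Ici (1:ℝ), fNq nrm φ N η' :=
      if_neg (not_lt.2 hy)
      rw [e1, e2]

lemma gq_measurable (hnrm : IsNorm nrm) (hφ : PhiOK φ) : Measurable (gq nrm φ) :=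
  (gq_anti hnrm hφ).measurable

end PAaux
end PAauxC


section PAauxD
open Topology
namespace PAaux

variable {d : ℕ} {nrm : Rd d → ℝ} {φ : ℝ → ℝ}

lemma hh_nonneg : ∀ η : ℝ, 0 < η → 0 ≤ (fun η => (gq nrm φ η).toReal) η :=
  fun _ _ => ENNReal.toReal_nonneg

lemma elem_eq (hnrm : IsNorm nrm) (hφ : PhiOK φ) {a η : ℝ} (ha : 0 ≤ a) (hη : 0 < η) :
    gq nrm φ η + ENNReal.ofReal a * ENNReal.ofReal η
      = ENNReal.ofReal ((gq nrm φ η).toReal + a * η) := by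
  rw [ENNReal.ofReal_add ENNReal.toReal_nonneg (mul_nonneg ha hη.le),
    ← ENNReal.ofReal_mul ha, ENNReal.ofReal_toReal (gq_ne_top hnrm hφ hη)]

lemma gbarR_eq_gb (hnrm : IsNorm nrm) (hφ : PhiOK φ) {a : ℝ} (ha : 0 < a) :
    gbarR nrm φ a = gb (fun η => (gq nrm φ η).toReal) a := by
  set h : ℝ → ℝ := fun η => (gq nrm φ η).toReal with hhdef
  set m : ℝ≥0∞ := gbarq nrm φ (ENNReal.ofReal a) with hmdef
  have step1 : ∀ η : ℝ, 0 < η → m ≤ ENNReal.ofReal (h η + a * η) := by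
    intro η hη
    rw [← elem_eq hnrm hφ ha.le hη]
    exact iInf₂_le η hη
  have step2 : m ≠ ⊤ := ne_top_of_le_ne_top ENNReal.ofReal_ne_top (step1 1 one_pos)
  have step3 : m.toReal ≤ gb h a := by
    refine le_csInf (gb_nonempty a) ?_
    rintro s ⟨η, hη, rfl⟩
    have := ENNReal.toReal_mono ENNReal.ofReal_ne_top (step1 η hη)
    rwa [ENNReal.toReal_ofReal (add_nonneg (ENNReal.toReal_nonneg)
      (mul_nonneg ha.le (le_of_lt hη)))] at this
  have step4 : gb h a ≤ m.toReal := by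
    refine le_of_forall_pos_le_add ?_
    intro ε hε
    have hlt : m < m + ENNReal.ofReal ε :=
      ENNReal.lt_add_right step2 (ENNReal.ofReal_pos.2 hε).ne'
    have h2 : ⨅ η ∈ Ioi (0:ℝ), (gq nrm φ η + ENNReal.ofReal a * ENNReal.ofReal η)
        < m + ENNReal.ofReal ε := hlt
    simp only [iInf_lt_iff] at h2
    obtain ⟨η, hη, hηlt⟩ := h2
    have hη' : (0:ℝ) < η := hη
    have hle : h η + a * η ≤ m.toReal + ε := by
      have h3 := ENNReal.toReal_mono
        (ENNReal.add_ne_top.2 ⟨step2, ENNReal.ofReal_ne_top⟩) hηlt.le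
      rwa [elem_eq hnrm hφ ha.le hη', ENNReal.toReal_ofReal (add_nonneg ENNReal.toReal_nonneg
        (mul_nonneg ha.le hη'.le)), ENNReal.toReal_add step2 ENNReal.ofReal_ne_top,
        ENNReal.toReal_ofReal hε.le] at h3
    exact le_trans (csInf_le (gb_bddBelow hh_nonneg ha.le) ⟨η, hη', rfl⟩) hle
  have hfin : gbarR nrm φ a = m.toReal := rfl
  rw [hfin]
  exact le_antisymm step3 step4

theorem conj1 (hnrm : IsNorm nrm) (hφ : PhiOK φ)
    (hconv : StrictConvexOn ℝ (Ioi 0) (fun η => (gq nrm φ η).toReal))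
    {a : ℝ} (ha : 0 < a) :
    HasDerivAt (gbarR nrm φ)
      (sInf {b : ℝ | 0 < b ∧ -(rightD (fun η => (gq nrm φ η).toReal) b) ≤ a}) a := by
  have hd : HasDerivAt (gb (fun η => (gq nrm φ η).toReal))
      (DD (fun η => (gq nrm φ η).toReal) a) a :=
    gb_hasDerivAt hconv hh_nonneg ha
  have hev : gbarR nrm φ =ᶠ[𝓝 a] gb (fun η => (gq nrm φ η).toReal) := by
    filter_upwards [Ioi_mem_nhds ha] with x hx
    exact gbarR_eq_gb hnrm hφ hx
  exact hd.congr_of_eventuallyEq hev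

end PAaux
end PAauxD


section PAauxE
open Topology
namespace PAaux

variable {d : ℕ} {nrm : Rd d → ℝ} {φ : ℝ → ℝ}

lemma h_contAt (hconv : StrictConvexOn ℝ (Ioi 0) (fun η => (gq nrm φ η).toReal))
    {t : ℝ} (ht : 0 < t) : ContinuousAt (fun η => (gq nrm φ η).toReal) t :=
  (hconv.convexOn.continuousOn isOpen_Ioi).continuousAt (Ioi_mem_nhds ht)

lemma h_le_h0 (hnrm : IsNorm nrm) (hφ : PhiOK φ) {ε : ℝ} (hε : 0 ≤ ε)
    (hfin : gq nrm φ 0 ≠ ⊤) : (gq nrm φ ε).toReal ≤ (gq nrm φ 0).toReal :=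
  ENNReal.toReal_mono hfin (gq_anti hnrm hφ hε)

lemma h_mid_pos (hconv : StrictConvexOn ℝ (Ioi 0) (fun η => (gq nrm φ η).toReal))
    {s t : ℝ} (hs : 0 < s) (ht : 0 < t) :
    2 * (gq nrm φ ((s + t)/2)).toReal ≤ (gq nrm φ s).toReal + (gq nrm φ t).toReal := by
  have := hconv.convexOn.2 (mem_Ioi.2 hs) (mem_Ioi.2 ht)
    (by norm_num : (0:ℝ) ≤ 1/2) (by norm_num : (0:ℝ) ≤ 1/2) (by norm_num)
  have harg : (1/2 : ℝ) • s + (1/2 : ℝ) • t = (s + t)/2 := by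
    simp only [smul_eq_mul]; ring
  rw [harg] at this
  simp only [smul_eq_mul] at this
  linarith

lemma h_mid_pos_strict (hconv : StrictConvexOn ℝ (Ioi 0) (fun η => (gq nrm φ η).toReal))
    {s t : ℝ} (hs : 0 < s) (ht : 0 < t) (hne : s ≠ t) :
    2 * (gq nrm φ ((s + t)/2)).toReal < (gq nrm φ s).toReal + (gq nrm φ t).toReal := by
  have := hconv.2 (mem_Ioi.2 hs) (mem_Ioi.2 ht) hne
    (by norm_num : (0:ℝ) < 1/2) (by norm_num : (0:ℝ) < 1/2) (by norm_num)
  have harg : (1/2 : ℝ) • s + (1/2 : ℝ) • t = (s + t)/2 := by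
    simp only [smul_eq_mul]; ring
  rw [harg] at this
  simp only [smul_eq_mul] at this
  linarith

lemma h_mid_boundary (hnrm : IsNorm nrm) (hφ : PhiOK φ)
    (hconv : StrictConvexOn ℝ (Ioi 0) (fun η => (gq nrm φ η).toReal))
    {t : ℝ} (ht : 0 < t) (hfin : gq nrm φ 0 ≠ ⊤) :
    2 * (gq nrm φ (t/2)).toReal ≤ (gq nrm φ 0).toReal + (gq nrm φ t).toReal := by
  set h : ℝ → ℝ := fun η => (gq nrm φ η).toReal with hhdef
  have key2 : ∀ ε : ℝ, ε ∈ Ioo (0:ℝ) (t/2) → h (t/2) ≤ (h 0 + h (t - ε))/2 := by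
    intro ε hε
    have h1 : (0:ℝ) < ε := hε.1
    have h2 : (0:ℝ) < t - ε := by have := hε.2; linarith [half_lt_self ht]
    have hcvx := hconv.convexOn.2 (mem_Ioi.2 h1) (mem_Ioi.2 h2)
      (by norm_num : (0:ℝ) ≤ 1/2) (by norm_num : (0:ℝ) ≤ 1/2) (by norm_num)
    have harg : (1/2 : ℝ) • ε + (1/2 : ℝ) • (t - ε) = t/2 := by
      simp only [smul_eq_mul]; ring
    rw [harg] at hcvx
    simp only [smul_eq_mul] at hcvx
    have hεh : h ε ≤ h 0 := h_le_h0 hnrm hφ h1.le hfin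
    have : h (t/2) ≤ 1/2 * h ε + 1/2 * h (t - ε) := hcvx
    linarith
  have hsub : Tendsto (fun ε : ℝ => t - ε) (𝓝[>] 0) (𝓝 t) := by
    have : Tendsto (fun ε : ℝ => t - ε) (𝓝 0) (𝓝 (t - 0)) :=
      (continuous_const.sub continuous_id).tendsto 0
    rw [sub_zero] at this
    exact this.mono_left nhdsWithin_le_nhds
  have hlim : Tendsto (fun ε : ℝ => (h 0 + h (t - ε))/2) (𝓝[>] 0) (𝓝 ((h 0 + h t)/2)) := by
    have hc : Tendsto (fun ε : ℝ => h (t - ε)) (𝓝[>] 0) (𝓝 (h t)) :=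
      (h_contAt hconv ht).tendsto.comp hsub
    exact (tendsto_const_nhds.add hc).div_const 2
  have hev : ∀ᶠ ε in 𝓝[>] (0:ℝ), h (t/2) ≤ (h 0 + h (t - ε))/2 := by
    filter_upwards [Ioo_mem_nhdsGT_of_mem ⟨le_refl (0:ℝ), half_pos ht⟩] with ε hε
    exact key2 ε hε
  have := ge_of_tendsto hlim hev
  linarith

lemma h_mid_boundary_strict (hnrm : IsNorm nrm) (hφ : PhiOK φ)
    (hconv : StrictConvexOn ℝ (Ioi 0) (fun η => (gq nrm φ η).toReal))
    {t : ℝ} (ht : 0 < t) (hfin : gq nrm φ 0 ≠ ⊤) :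
    2 * (gq nrm φ (t/2)).toReal < (gq nrm φ 0).toReal + (gq nrm φ t).toReal := by
  set h : ℝ → ℝ := fun η => (gq nrm φ η).toReal with hhdef
  have hstrict : 2 * h (t/2) < h (t/4) + h (3*t/4) := by
    have := h_mid_pos_strict hconv (show (0:ℝ) < t/4 by linarith)
      (show (0:ℝ) < 3*t/4 by linarith) (by intro hc; linarith [hc])
    have harg : (t/4 + 3*t/4)/2 = t/2 := by ring
    rw [harg] at this
    exact this
  have h1 : 2 * h (t/4) ≤ h 0 + h (t/2) := by
    have := h_mid_boundary hnrm hφ hconv (half_pos ht) hfin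
    have harg : t/2/2 = t/4 := by ring
    rw [harg] at this
    exact this
  have h2 : 2 * h (3*t/4) ≤ h (t/2) + h t := by
    have := h_mid_pos hconv (half_pos ht) ht
    have harg : (t/2 + t)/2 = 3*t/4 := by ring
    rw [harg] at this
    exact this
  linarith

lemma gq_eq_ofReal_of_ne_top {x : ℝ} (hx : gq nrm φ x ≠ ⊤) :
    gq nrm φ x = ENNReal.ofReal ((gq nrm φ x).toReal) := (ENNReal.ofReal_toReal hx).symm

lemma ennreal_mid_le {a b c : ℝ≥0∞} (ha : a ≠ ⊤) (hb : b ≠ ⊤) (hc : c ≠ ⊤)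
    (h : 2 * a.toReal ≤ b.toReal + c.toReal) : a + a ≤ b + c := by
  rw [← ENNReal.ofReal_toReal ha, ← ENNReal.ofReal_toReal hb, ← ENNReal.ofReal_toReal hc,
    ← ENNReal.ofReal_add ENNReal.toReal_nonneg ENNReal.toReal_nonneg,
    ← ENNReal.ofReal_add ENNReal.toReal_nonneg ENNReal.toReal_nonneg]
  exact ENNReal.ofReal_le_ofReal (by linarith)

lemma ennreal_mid_lt {a b c : ℝ≥0∞} (ha : a ≠ ⊤) (hb : b ≠ ⊤) (hc : c ≠ ⊤)
    (h : 2 * a.toReal < b.toReal + c.toReal) : a + a < b + c := by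
  rw [← ENNReal.ofReal_toReal ha, ← ENNReal.ofReal_toReal hb, ← ENNReal.ofReal_toReal hc,
    ← ENNReal.ofReal_add ENNReal.toReal_nonneg ENNReal.toReal_nonneg,
    ← ENNReal.ofReal_add ENNReal.toReal_nonneg ENNReal.toReal_nonneg]
  rw [ENNReal.ofReal_lt_ofReal_iff_of_nonneg
    (add_nonneg ENNReal.toReal_nonneg ENNReal.toReal_nonneg)]
  linarith

lemma gq_mid (hnrm : IsNorm nrm) (hφ : PhiOK φ)
    (hconv : StrictConvexOn ℝ (Ioi 0) (fun η => (gq nrm φ η).toReal))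
    {s t : ℝ} (hs : 0 ≤ s) (ht : 0 ≤ t) :
    gq nrm φ ((s + t)/2) + gq nrm φ ((s + t)/2) ≤ gq nrm φ s + gq nrm φ t := by
  by_cases htop : gq nrm φ s = ⊤ ∨ gq nrm φ t = ⊤
  · have : gq nrm φ s + gq nrm φ t = ⊤ := by
      rcases htop with h | h <;> simp [h]
    rw [this]; exact le_top
  push_neg at htop
  obtain ⟨hst, htt⟩ := htop
  rcases eq_or_lt_of_le hs with hs0 | hs0
  · rcases eq_or_lt_of_le ht with ht0 | ht0
    · rw [← hs0, ← ht0]; norm_num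
    · -- s = 0 < t
      have hst0 : gq nrm φ 0 ≠ ⊤ := by rwa [hs0]
      have hmid : (s + t)/2 = t/2 := by rw [← hs0]; ring
      rw [hmid, ← hs0]
      exact ennreal_mid_le (gq_ne_top hnrm hφ (half_pos ht0)) hst0 htt
        (h_mid_boundary hnrm hφ hconv ht0 hst0)
  · rcases eq_or_lt_of_le ht with ht0 | ht0
    · -- t = 0 < s
      have htt0 : gq nrm φ 0 ≠ ⊤ := by rwa [ht0]
      have hmid : (s + t)/2 = s/2 := by rw [← ht0]; ring
      rw [hmid, ← ht0]
      exact ennreal_mid_le (gq_ne_top hnrm hφ (half_pos hs0)) hst htt0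
        (by have := h_mid_boundary hnrm hφ hconv hs0 htt0; linarith)
    · exact ennreal_mid_le (gq_ne_top hnrm hφ (by linarith)) hst htt (h_mid_pos hconv hs0 ht0)

lemma gq_mid_strict (hnrm : IsNorm nrm) (hφ : PhiOK φ)
    (hconv : StrictConvexOn ℝ (Ioi 0) (fun η => (gq nrm φ η).toReal))
    {s t : ℝ} (hs : 0 ≤ s) (ht : 0 ≤ t) (hne : s ≠ t)
    (hst : gq nrm φ s ≠ ⊤) (htt : gq nrm φ t ≠ ⊤) :
    gq nrm φ ((s + t)/2) + gq nrm φ ((s + t)/2) < gq nrm φ s + gq nrm φ t := by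
  rcases eq_or_lt_of_le hs with hs0 | hs0
  · rcases eq_or_lt_of_le ht with ht0 | ht0
    · exact absurd (hs0.symm.trans ht0) hne
    · have hst0 : gq nrm φ 0 ≠ ⊤ := by rwa [hs0]
      have hmid : (s + t)/2 = t/2 := by rw [← hs0]; ring
      rw [hmid, ← hs0]
      exact ennreal_mid_lt (gq_ne_top hnrm hφ (half_pos ht0)) hst0 htt
        (h_mid_boundary_strict hnrm hφ hconv ht0 hst0)
  · rcases eq_or_lt_of_le ht with ht0 | ht0
    · have htt0 : gq nrm φ 0 ≠ ⊤ := by rwa [ht0]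
      have hmid : (s + t)/2 = s/2 := by rw [← ht0]; ring
      rw [hmid, ← ht0]
      exact ennreal_mid_lt (gq_ne_top hnrm hφ (half_pos hs0)) hst htt0
        (by have := h_mid_boundary_strict hnrm hφ hconv hs0 htt0; linarith)
    · exact ennreal_mid_lt (gq_ne_top hnrm hφ (by linarith)) hst htt
        (h_mid_pos_strict hconv hs0 ht0 hne)

end PAaux
end PAauxE


section PAauxF
open Topology
namespace PAaux

variable {d : ℕ} {nrm : Rd d → ℝ} {φ : ℝ → ℝ} {μ : Measure (Rd d)}

lemma muc_ac : muc μ ≪ (volume : Measure (Rd d)) :=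
  withDensity_absolutelyContinuous _ _

lemma muc_le_mu : muc μ ≤ μ := Measure.withDensity_rnDeriv_le μ volume

lemma muc_univ_le_one [IsProbabilityMeasure μ] : muc μ univ ≤ 1 := by
  calc muc μ univ ≤ μ univ := muc_le_mu univ
    _ = 1 := measure_univ

lemma hZ_meas : MeasurableSet {x : Rd d | μ.rnDeriv volume x = 0} :=
  (μ.measurable_rnDeriv volume) (measurableSet_singleton 0)

lemma muc_Z_zero : muc μ {x : Rd d | μ.rnDeriv volume x = 0} = 0 := by
  rw [muc, withDensity_apply _ hZ_meas]
  rw [setLIntegral_congr_fun hZ_meas (fun x hx => hx)]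
  simp

/-- a minimizer of the point allocation problem has zero integral on the set where the
density vanishes -/
lemma minimizer_vanishes [IsProbabilityMeasure μ]
    (hI0 : 0 < pav nrm φ μ) (hItop : pav nrm φ μ ≠ ⊤)
    {ξ : Rd d → ℝ} (hn : ∀ x, 0 ≤ ξ x) (hi : Integrable ξ volume)
    (hc : (∫⁻ x, gq nrm φ (ξ x) ∂(muc μ)) ≤ 1)
    (hv : ENNReal.ofReal (∫ x, ξ x) = pav nrm φ μ) :
    ∀ᵐ x ∂(volume.restrict {x : Rd d | μ.rnDeriv volume x = 0}), ξ x = 0 := by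
  set Z := {x : Rd d | μ.rnDeriv volume x = 0} with hZdef
  have hZm : MeasurableSet Z := hZ_meas
  have hpavR : (0:ℝ) < (pav nrm φ μ).toReal := ENNReal.toReal_pos hI0.ne' hItop
  have hint : ∫ x, ξ x = (pav nrm φ μ).toReal := by
    rw [← hv, ENNReal.toReal_ofReal (integral_nonneg hn)]
  set ξ' := Zᶜ.indicator ξ with hξ'def
  have h1 : ∀ x, 0 ≤ ξ' x := fun x => Set.indicator_apply_nonneg (fun _ => hn x)
  have h2 : Integrable ξ' volume := hi.indicator hZm.compl
  have haeZ : ∀ᵐ x ∂(muc μ), x ∈ Zᶜ := by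
    rw [ae_iff]
    have hset : {x : Rd d | ¬ x ∈ Zᶜ} = Z := by ext x; simp [hZdef]
    rw [hset]
    exact muc_Z_zero
  have h3 : (∫⁻ x, gq nrm φ (ξ' x) ∂(muc μ)) ≤ 1 := by
    have : (∫⁻ x, gq nrm φ (ξ' x) ∂(muc μ)) = ∫⁻ x, gq nrm φ (ξ x) ∂(muc μ) := by
      refine lintegral_congr_ae ?_
      filter_upwards [haeZ] with x hx
      rw [hξ'def, Set.indicator_of_mem hx]
    rw [this]; exact hc
  have h4 : pav nrm φ μ ≤ ENNReal.ofReal (∫ x, ξ' x) := by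
    rw [pav]
    exact iInf_le_of_le ξ' (iInf_le_of_le h1 (iInf_le_of_le h2 (iInf_le_of_le h3 le_rfl)))
  have h5 : ∫ x, ξ' x = ∫ x in Zᶜ, ξ x := integral_indicator hZm.compl
  have h6 := integral_add_compl hZm hi
  have h7 : 0 ≤ ∫ x in Z, ξ x := setIntegral_nonneg hZm (fun x _ => hn x)
  have hZ0 : ∫ x in Z, ξ x = 0 := by
    by_contra hne
    have hpos : 0 < ∫ x in Z, ξ x := lt_of_le_of_ne h7 (Ne.symm hne)
    have hlt : ∫ x, ξ' x < (pav nrm φ μ).toReal := by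
      rw [h5, ← hint]; linarith
    have : ENNReal.ofReal (∫ x, ξ' x) < pav nrm φ μ := by
      calc ENNReal.ofReal (∫ x, ξ' x) < ENNReal.ofReal ((pav nrm φ μ).toReal) :=
            (ENNReal.ofReal_lt_ofReal_iff hpavR).2 hlt
        _ = pav nrm φ μ := ENNReal.ofReal_toReal hItop
    exact absurd h4 (not_le.2 this)
  have := (setIntegral_eq_zero_iff_of_nonneg_ae
    (ae_of_all _ (fun x => hn x) : 0 ≤ᵐ[volume.restrict Z] ξ) hi.integrableOn).1 hZ0
  filter_upwards [this] with x hx using hx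

end PAaux
end PAauxF


section PAauxG
open Topology
namespace PAaux

variable {d : ℕ} {nrm : Rd d → ℝ} {φ : ℝ → ℝ} {μ : Measure (Rd d)}

lemma minimizers_ae_eq_muc (hd : 0 < d) (hnrm : IsNorm nrm) (hφ : PhiOK φ)
    [IsProbabilityMeasure μ]
    (hI0 : 0 < pav nrm φ μ) (hItop : pav nrm φ μ ≠ ⊤)
    (hconv : StrictConvexOn ℝ (Ioi 0) (fun η => (gq nrm φ η).toReal))
    {ξ₁ ξ₂ : Rd d → ℝ}
    (h1n : ∀ x, 0 ≤ ξ₁ x) (h1i : Integrable ξ₁ volume)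
    (h1c : (∫⁻ x, gq nrm φ (ξ₁ x) ∂(muc μ)) ≤ 1)
    (h1v : ENNReal.ofReal (∫ x, ξ₁ x) = pav nrm φ μ)
    (h2n : ∀ x, 0 ≤ ξ₂ x) (h2i : Integrable ξ₂ volume)
    (h2c : (∫⁻ x, gq nrm φ (ξ₂ x) ∂(muc μ)) ≤ 1)
    (h2v : ENNReal.ofReal (∫ x, ξ₂ x) = pav nrm φ μ) :
    ξ₁ =ᵐ[muc μ] ξ₂ := by
  classical
  by_contra hne
  have hG : Measurable (gq nrm φ) := gq_measurable hnrm hφ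
  have hpavR : (0:ℝ) < (pav nrm φ μ).toReal := ENNReal.toReal_pos hI0.ne' hItop
  have hint1 : ∫ x, ξ₁ x = (pav nrm φ μ).toReal := by
    rw [← h1v, ENNReal.toReal_ofReal (integral_nonneg h1n)]
  have hint2 : ∫ x, ξ₂ x = (pav nrm φ μ).toReal := by
    rw [← h2v, ENNReal.toReal_ofReal (integral_nonneg h2n)]
  set ξm : Rd d → ℝ := fun x => (ξ₁ x + ξ₂ x)/2 with hξmdef
  have hmn : ∀ x, 0 ≤ ξm x := fun x => by
    have := h1n x; have := h2n x; simp only [hξmdef]; positivity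
  have hmi : Integrable ξm volume := (h1i.add h2i).div_const 2
  have hmv : ∫ x, ξm x = (pav nrm φ μ).toReal := by
    simp only [hξmdef]
    rw [integral_div, integral_add h1i h2i, hint1, hint2]
    ring
  set Fi : Rd d → ℝ≥0∞ := fun x => gq nrm φ (ξm x) with hFidef
  set Fav : Rd d → ℝ≥0∞ := fun x => gq nrm φ (ξ₁ x) + gq nrm φ (ξ₂ x) with hFavdef
  have hkey : ∀ x, Fi x + Fi x ≤ Fav x := fun x =>
    gq_mid hnrm hφ hconv (h1n x) (h2n x)
  have hξ1m : AEMeasurable ξ₁ (muc μ) := h1i.aemeasurable.mono_ac muc_ac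
  have hξ2m : AEMeasurable ξ₂ (muc μ) := h2i.aemeasurable.mono_ac muc_ac
  have hξmm : AEMeasurable ξm (muc μ) := hmi.aemeasurable.mono_ac muc_ac
  have hF1 : AEMeasurable (fun x => gq nrm φ (ξ₁ x)) (muc μ) := hG.comp_aemeasurable hξ1m
  have hF2 : AEMeasurable (fun x => gq nrm φ (ξ₂ x)) (muc μ) := hG.comp_aemeasurable hξ2m
  have hFm : AEMeasurable Fi (muc μ) := hG.comp_aemeasurable hξmm
  have hFav_int : ∫⁻ x, Fav x ∂(muc μ) ≤ 2 := by
    simp only [hFavdef]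
    rw [lintegral_add_left' hF1]
    calc (∫⁻ x, gq nrm φ (ξ₁ x) ∂(muc μ)) + ∫⁻ x, gq nrm φ (ξ₂ x) ∂(muc μ) ≤ 1 + 1 :=
          add_le_add h1c h2c
      _ = 2 := one_add_one_eq_two
  have h2Fi : ∫⁻ x, (Fi x + Fi x) ∂(muc μ) = 2 * ∫⁻ x, Fi x ∂(muc μ) := by
    rw [lintegral_add_left' hFm, two_mul]
  have hFi_le_one : ∫⁻ x, Fi x ∂(muc μ) ≤ 1 := by
    have h2le : 2 * (∫⁻ x, Fi x ∂(muc μ)) ≤ 2 * 1 := by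
      rw [mul_one, ← h2Fi]
      exact le_trans (lintegral_mono hkey) hFav_int
    exact (ENNReal.mul_le_mul_iff_right (by norm_num) (by norm_num)).1 h2le
  have hT : muc μ {x | ξ₁ x ≠ ξ₂ x} ≠ 0 := by
    intro hc0
    exact hne (by rw [Filter.EventuallyEq, ae_iff]; exact hc0)
  rcases lt_or_ge (∫⁻ x, Fi x ∂(muc μ)) 1 with hlt | hge
  · -- strict slack case: perturbation argument
    set c := ∫⁻ x, Fi x ∂(muc μ) with hcdef
    obtain ⟨w, wmeas, hw⟩ : ∃ w : Rd d → ℝ, Measurable w ∧ ξm =ᵐ[volume] w :=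
      ⟨hmi.aemeasurable.mk ξm, hmi.aemeasurable.measurable_mk, hmi.aemeasurable.ae_eq_mk⟩
    have hwmuc : ξm =ᵐ[muc μ] w := hw.filter_mono muc_ac.ae_le
    have hTsub : ∀ x, ξ₁ x ≠ ξ₂ x → 0 < ξm x := by
      intro x hx
      rcases lt_or_eq_of_le (hmn x) with h | h
      · exact h
      · exfalso; apply hx
        have ha := h1n x; have hb := h2n x
        have hs : ξ₁ x + ξ₂ x = 0 := by
          have : (ξ₁ x + ξ₂ x)/2 = 0 := h.symm
          linarith
        have e1 : ξ₁ x = 0 := by linarith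
        have e2 : ξ₂ x = 0 := by linarith
        rw [e1, e2]
    have hwpos : muc μ {x | 0 < w x} ≠ 0 := by
      intro h0
      apply hT
      have hsub : {x | ξ₁ x ≠ ξ₂ x} ⊆ {x | 0 < w x} ∪ {x | ¬ ξm x = w x} := by
        intro x hx
        by_cases hxe : ξm x = w x
        · left; show 0 < w x; rw [← hxe]; exact hTsub x hx
        · right; exact hxe
      have hμne : muc μ {x | ¬ ξm x = w x} = 0 := ae_iff.1 hwmuc
      have := measure_mono (μ := muc μ) hsub
      rw [← le_zero_iff]
      calc muc μ {x | ξ₁ x ≠ ξ₂ x}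
          ≤ muc μ ({x | 0 < w x} ∪ {x | ¬ ξm x = w x}) := this
        _ ≤ muc μ {x | 0 < w x} + muc μ {x | ¬ ξm x = w x} := measure_union_le _ _
        _ = 0 := by rw [h0, hμne, add_zero]
    set En : ℕ → Set (Rd d) := fun n =>
      ({x | 1/((n:ℝ)+1) ≤ w x} ∩ {x | w x ≤ (n:ℝ)}) ∩ Metric.closedBall 0 n with hEndef
    have hEnm : ∀ n, MeasurableSet (En n) := fun n =>
      ((wmeas measurableSet_Ici).inter (wmeas measurableSet_Iic)).inter
        measurableSet_closedBall
    have hcover : {x | 0 < w x} ⊆ ⋃ n, En n := by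
      intro x hx
      have hwx : (0:ℝ) < w x := hx
      simp only [mem_iUnion]
      obtain ⟨n₁, hn₁⟩ := exists_nat_ge (1 / w x)
      obtain ⟨n₂, hn₂⟩ := exists_nat_ge (w x)
      obtain ⟨n₃, hn₃⟩ := exists_nat_ge ‖x‖
      refine ⟨n₁ + n₂ + n₃, ⟨⟨?_, ?_⟩, ?_⟩⟩
      · show 1/((↑(n₁ + n₂ + n₃):ℝ)+1) ≤ w x
        have hle : 1 / w x ≤ (↑(n₁ + n₂ + n₃):ℝ) + 1 := by
          push_cast
          push_cast at hn₁
          have c2 : (0:ℝ) ≤ (n₂:ℝ) := Nat.cast_nonneg n₂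
          have c3 : (0:ℝ) ≤ (n₃:ℝ) := Nat.cast_nonneg n₃
          linarith
        rw [div_le_iff₀ hwx] at hle
        have hpos : (0:ℝ) < (↑(n₁ + n₂ + n₃):ℝ) + 1 := by positivity
        rw [div_le_iff₀ hpos]
        nlinarith
      · show w x ≤ (↑(n₁ + n₂ + n₃):ℝ)
        have : (n₂:ℝ) ≤ (↑(n₁ + n₂ + n₃):ℝ) := by
          push_cast
          have c1 : (0:ℝ) ≤ (n₁:ℝ) := Nat.cast_nonneg n₁
          have c3 : (0:ℝ) ≤ (n₃:ℝ) := Nat.cast_nonneg n₃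
          linarith
        linarith
      · show x ∈ Metric.closedBall 0 (↑(n₁ + n₂ + n₃))
        rw [Metric.mem_closedBall, dist_zero_right]
        have : (n₃:ℝ) ≤ (↑(n₁ + n₂ + n₃):ℝ) := by
          push_cast
          have c1 : (0:ℝ) ≤ (n₁:ℝ) := Nat.cast_nonneg n₁
          have c2 : (0:ℝ) ≤ (n₂:ℝ) := Nat.cast_nonneg n₂
          linarith
        linarith
    obtain ⟨n, hn⟩ : ∃ n, muc μ (En n) ≠ 0 := by
      by_contra hall
      push_neg at hall
      exact hwpos (measure_mono_null hcover (measure_iUnion_null hall))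
    set ε₀ : ℝ := 1/((n:ℝ)+1) with hε₀def
    have hε₀pos : 0 < ε₀ := by rw [hε₀def]; positivity
    set A := En n with hAdef
    have hA : MeasurableSet A := hEnm n
    have hvolA : volume A ≠ 0 := fun h0 => hn (muc_ac h0)
    have hvolAtop : volume A ≠ ⊤ := by
      refine ne_top_of_le_ne_top (isCompact_closedBall (0 : Rd d) n).measure_lt_top.ne
        (measure_mono ?_)
      exact fun x hx => hx.2
    have hmucA_fin : muc μ A ≠ ⊤ :=
      ne_top_of_le_ne_top ENNReal.one_ne_top
        (le_trans (measure_mono (subset_univ A)) muc_univ_le_one)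
    set δs : ℕ → ℝ := fun k => ε₀ / (2*((k:ℝ)+1)) with hδdef
    have hδpos : ∀ k, 0 < δs k := fun k => by
      rw [hδdef]; have := hε₀pos; positivity
    have hδle : ∀ k, δs k ≤ ε₀/2 := by
      intro k
      rw [hδdef]
      refine div_le_div_of_nonneg_left hε₀pos.le (by norm_num) ?_
      have : (0:ℝ) ≤ (k:ℝ) := Nat.cast_nonneg k
      linarith
    have hδtend : Tendsto δs atTop (𝓝 0) := by
      have h1 : Tendsto (fun k : ℕ => 1/((k:ℝ)+1)) atTop (𝓝 0) :=
        tendsto_one_div_add_atTop_nhds_zero_nat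
      have heq : δs = fun k : ℕ => (ε₀/2) * (1/((k:ℝ)+1)) := by
        funext k; rw [hδdef, mul_one_div, div_div]
      rw [heq]
      simpa using h1.const_mul (ε₀/2)
    set cA := ∫⁻ x in A, gq nrm φ (w x) ∂(muc μ) with hcAdef
    have hcA_eq : cA = ∫⁻ x in A, Fi x ∂(muc μ) := by
      rw [hcAdef]
      refine lintegral_congr_ae (ae_restrict_of_ae ?_)
      filter_upwards [hwmuc] with x hxw
      simp only [hFidef]
      rw [hxw]
    have hc_split : (∫⁻ x in A, Fi x ∂(muc μ)) + ∫⁻ x in Aᶜ, Fi x ∂(muc μ) = c :=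
      lintegral_add_compl Fi hA
    have hcA_le : cA ≤ c := by
      rw [hcA_eq]
      exact le_trans (le_self_add) hc_split.le
    have hcA_ne_top : cA ≠ ⊤ :=
      ne_top_of_le_ne_top (ne_top_of_lt (lt_of_lt_of_le hlt le_top)) hcA_le
    have hc_ne_top : c ≠ ⊤ := hlt.ne_top
    have hDCT : Tendsto (fun k => ∫⁻ x in A, gq nrm φ (w x - δs k) ∂(muc μ)) atTop (𝓝 cA) := by
      rw [hcAdef]
      refine tendsto_lintegral_of_dominated_convergence (fun _ => gq nrm φ (ε₀/2))
        (fun k => hG.comp (wmeas.sub measurable_const)) ?_ ?_ ?_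
      · intro k
        refine (ae_restrict_iff' hA).2 (ae_of_all _ ?_)
        intro x hxA
        have hxw : ε₀ ≤ w x := hxA.1.1
        have hk := hδle k
        exact gq_anti hnrm hφ (by linarith : ε₀/2 ≤ w x - δs k)
      · rw [lintegral_const]
        exact ENNReal.mul_ne_top (gq_ne_top hnrm hφ (half_pos hε₀pos))
          (by rw [Measure.restrict_apply_univ]; exact hmucA_fin)
      · refine (ae_restrict_iff' hA).2 (ae_of_all _ ?_)
        intro x hxA
        have hxw : ε₀ ≤ w x := hxA.1.1
        have hwx : 0 < w x := lt_of_lt_of_le hε₀pos hxw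
        have harg : Tendsto (fun k => w x - δs k) atTop (𝓝 (w x)) := by
          have h2 := Tendsto.sub
            (tendsto_const_nhds : Tendsto (fun _ : ℕ => w x) atTop (𝓝 (w x))) hδtend
          simpa using h2
        have h1 : Tendsto (fun k => ((gq nrm φ (w x - δs k)).toReal)) atTop
            (𝓝 ((gq nrm φ (w x)).toReal)) := (h_contAt hconv hwx).tendsto.comp harg
        have h2 := (ENNReal.continuous_ofReal.tendsto _).comp h1
        have hargpos : ∀ k, 0 < w x - δs k := fun k => by
          have := hδle k; have := hδpos k; linarith
        have h3 : ∀ k, ENNReal.ofReal ((gq nrm φ (w x - δs k)).toReal)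
            = gq nrm φ (w x - δs k) :=
          fun k => ENNReal.ofReal_toReal (gq_ne_top hnrm hφ (hargpos k))
        have h4 : ENNReal.ofReal ((gq nrm φ (w x)).toReal) = gq nrm φ (w x) :=
          ENNReal.ofReal_toReal (gq_ne_top hnrm hφ hwx)
        rw [← h4]
        exact h2.congr h3
    have hgapne : (1 - c)/2 ≠ 0 := by
      have h1c : (1:ℝ≥0∞) - c ≠ 0 := (tsub_pos_iff_lt.2 hlt).ne'
      rw [ne_eq, ENNReal.div_eq_zero_iff]
      simp [h1c]
    have hgap2 : cA < cA + (1 - c)/2 := ENNReal.lt_add_right hcA_ne_top hgapne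
    obtain ⟨k, hk⟩ := (hDCT.eventually_lt_const hgap2).exists
    set δ₀ := δs k with hδ₀def
    have hδ₀pos : 0 < δ₀ := hδpos k
    have hδ₀lt : δ₀ < ε₀ := lt_of_le_of_lt (hδle k) (half_lt_self hε₀pos)
    set ξ' : Rd d → ℝ := fun x => if x ∈ A then max (ξm x - δ₀) 0 else ξm x with hξ'def
    have hξ'n : ∀ x, 0 ≤ ξ' x := by
      intro x; rw [hξ'def]; dsimp only
      split
      · exact le_max_right _ _
      · exact hmn x
    have hξ'alt : ξ' = fun x => max (ξm x - δ₀ * A.indicator (fun _ => (1:ℝ)) x) 0 := by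
      funext x
      rw [hξ'def]; dsimp only
      by_cases hxA : x ∈ A
      · rw [if_pos hxA, Set.indicator_of_mem hxA, mul_one]
      · rw [if_neg hxA, Set.indicator_of_notMem hxA, mul_zero, sub_zero]
        exact (max_eq_left (hmn x)).symm
    have hind_int : Integrable (fun x => δ₀ * A.indicator (fun _ => (1:ℝ)) x) volume := by
      refine Integrable.const_mul ?_ δ₀
      rw [integrable_indicator_iff hA]
      exact integrableOn_const hvolAtop
    have hξ'i : Integrable ξ' volume := by
      rw [hξ'alt]
      exact (hmi.sub hind_int).pos_part
    have hconstr : (∫⁻ x, gq nrm φ (ξ' x) ∂(muc μ)) ≤ 1 := by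
      have hsplit := lintegral_add_compl (fun x => gq nrm φ (ξ' x)) (μ := muc μ) hA
      have hAc : ∫⁻ x in Aᶜ, gq nrm φ (ξ' x) ∂(muc μ) = ∫⁻ x in Aᶜ, Fi x ∂(muc μ) := by
        refine setLIntegral_congr_fun hA.compl ?_
        intro x hx
        simp only [hξ'def, hFidef]
        rw [if_neg (by simpa using hx)]
      have hAeq : ∫⁻ x in A, gq nrm φ (ξ' x) ∂(muc μ)
          = ∫⁻ x in A, gq nrm φ (w x - δ₀) ∂(muc μ) := by
        refine lintegral_congr_ae ?_
        filter_upwards [ae_restrict_of_ae hwmuc, ae_restrict_mem hA] with x hxw hxA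
        simp only [hξ'def]
        rw [if_pos hxA, hxw]
        have hxwl : ε₀ ≤ w x := hxA.1.1
        rw [max_eq_left (by linarith : (0:ℝ) ≤ w x - δ₀)]
      calc (∫⁻ x, gq nrm φ (ξ' x) ∂(muc μ))
          = (∫⁻ x in A, gq nrm φ (ξ' x) ∂(muc μ))
            + ∫⁻ x in Aᶜ, gq nrm φ (ξ' x) ∂(muc μ) := hsplit.symm
        _ = (∫⁻ x in A, gq nrm φ (w x - δ₀) ∂(muc μ)) + ∫⁻ x in Aᶜ, Fi x ∂(muc μ) := by
            rw [hAeq, hAc]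
        _ ≤ (cA + (1-c)/2) + ∫⁻ x in Aᶜ, Fi x ∂(muc μ) := add_le_add hk.le le_rfl
        _ = ((∫⁻ x in A, Fi x ∂(muc μ)) + ∫⁻ x in Aᶜ, Fi x ∂(muc μ)) + (1-c)/2 := by
            rw [hcA_eq]; rw [add_right_comm]
        _ = c + (1-c)/2 := by rw [hc_split]
        _ ≤ c + (1-c) := add_le_add le_rfl ENNReal.half_le_self
        _ = 1 := by rw [add_comm]; exact tsub_add_cancel_of_le hlt.le
    have haeval : ξ' =ᵐ[volume] (fun x => ξm x - δ₀ * A.indicator (fun _ => (1:ℝ)) x) := by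
      filter_upwards [hw] with x hxw
      rw [hξ'alt]; dsimp only
      by_cases hxA : x ∈ A
      · rw [Set.indicator_of_mem hxA, mul_one]
        have hxwl : ε₀ ≤ w x := hxA.1.1
        have : δ₀ ≤ ξm x := by rw [hxw]; linarith
        rw [max_eq_left (by linarith : (0:ℝ) ≤ ξm x - δ₀)]
      · rw [Set.indicator_of_notMem hxA, mul_zero, sub_zero, max_eq_left (hmn x)]
    have hξ'val : ∫ x, ξ' x = (pav nrm φ μ).toReal - δ₀ * (volume A).toReal := by
      rw [integral_congr_ae haeval, integral_sub hmi hind_int, hmv]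
      congr 1
      rw [integral_const_mul, integral_indicator_const (1:ℝ) hA]
      simp [Measure.real]
    have hvolAR : 0 < (volume A).toReal := ENNReal.toReal_pos hvolA hvolAtop
    have hval : ∫ x, ξ' x < (pav nrm φ μ).toReal := by
      rw [hξ'val]; nlinarith
    have hle : pav nrm φ μ ≤ ENNReal.ofReal (∫ x, ξ' x) := by
      rw [pav]
      exact iInf_le_of_le ξ' (iInf_le_of_le hξ'n (iInf_le_of_le hξ'i
        (iInf_le_of_le hconstr le_rfl)))
    have hcontra : ENNReal.ofReal (∫ x, ξ' x) < pav nrm φ μ := by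
      calc ENNReal.ofReal (∫ x, ξ' x)
          < ENNReal.ofReal ((pav nrm φ μ).toReal) :=
            (ENNReal.ofReal_lt_ofReal_iff hpavR).2 hval
        _ = pav nrm φ μ := ENNReal.ofReal_toReal hItop
    exact absurd hle (not_le.2 hcontra)
  · -- equality case
    have hFi_eq : ∫⁻ x, Fi x ∂(muc μ) = 1 := le_antisymm hFi_le_one hge
    have hfsum : ∫⁻ x, (Fi x + Fi x) ∂(muc μ) = 2 := by
      rw [h2Fi, hFi_eq, mul_one]
    have hae : (fun x => Fi x + Fi x) =ᵐ[muc μ] Fav := by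
      refine ae_eq_of_ae_le_of_lintegral_le (ae_of_all _ hkey) ?_ (hF1.add hF2) ?_
      · rw [hfsum]; exact ENNReal.ofNat_ne_top
      · rw [hfsum]; exact hFav_int
    have hfinae : ∀ᵐ x ∂(muc μ), Fav x < ⊤ :=
      ae_lt_top' (hF1.add hF2) (ne_top_of_le_ne_top ENNReal.ofNat_ne_top hFav_int)
    have : ξ₁ =ᵐ[muc μ] ξ₂ := by
      filter_upwards [hae, hfinae] with x hx hfin
      by_contra hxne
      have hfin1 : gq nrm φ (ξ₁ x) ≠ ⊤ := by
        intro hc0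
        have htop : Fav x = ⊤ := by simp [hFavdef, hc0]
        rw [htop] at hfin; exact absurd hfin (lt_irrefl _)
      have hfin2 : gq nrm φ (ξ₂ x) ≠ ⊤ := by
        intro hc0
        have htop : Fav x = ⊤ := by simp [hFavdef, hc0]
        rw [htop] at hfin; exact absurd hfin (lt_irrefl _)
      have hstr := gq_mid_strict hnrm hφ hconv (h1n x) (h2n x) hxne hfin1 hfin2
      simp only [hFidef, hFavdef, hξmdef] at hx
      rw [hx] at hstr
      exact lt_irrefl _ hstr
    exact hne this

end PAaux
end PAauxG

/-- If `I ∈ (0,∞)` and `g` is strictly convex on `(0,∞)`, then `ḡ` is differentiable with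
`ḡ'(a) = inf{b > 0 : -g'_+(b) ≤ a}`, and optimal point densities are a.e. unique. -/
theorem statement16 {d : ℕ} (hd : 0 < d)
    (nrm : Rd d → ℝ) (hnrm : IsNorm nrm) (φ : ℝ → ℝ) (hφ : PhiOK φ)
    (μ : Measure (Rd d)) [IsProbabilityMeasure μ]
    (hI0 : 0 < pav nrm φ μ) (hItop : pav nrm φ μ ≠ ⊤)
    (hconv : StrictConvexOn ℝ (Ioi 0) (fun η => (gq nrm φ η).toReal)) :
    (∀ a : ℝ, 0 < a →
      HasDerivAt (gbarR nrm φ)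
        (sInf {b : ℝ | 0 < b ∧ -(rightD (fun η => (gq nrm φ η).toReal) b) ≤ a}) a) ∧
    (∀ ξ₁ ξ₂ : Rd d → ℝ,
      ((∀ x, 0 ≤ ξ₁ x) ∧ Integrable ξ₁ volume ∧
        (∫⁻ x, gq nrm φ (ξ₁ x) ∂(muc μ)) ≤ 1 ∧ ENNReal.ofReal (∫ x, ξ₁ x) = pav nrm φ μ) →
      ((∀ x, 0 ≤ ξ₂ x) ∧ Integrable ξ₂ volume ∧
        (∫⁻ x, gq nrm φ (ξ₂ x) ∂(muc μ)) ≤ 1 ∧ ENNReal.ofReal (∫ x, ξ₂ x) = pav nrm φ μ) →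
      ξ₁ =ᵐ[(volume : Measure (Rd d))] ξ₂) := by
  constructor
  · intro a ha
    exact PAaux.conj1 hnrm hφ hconv ha
  · rintro ξ₁ ξ₂ ⟨h1n, h1i, h1c, h1v⟩ ⟨h2n, h2i, h2c, h2v⟩
    have hmuceq : ξ₁ =ᵐ[muc μ] ξ₂ :=
      PAaux.minimizers_ae_eq_muc hd hnrm hφ hI0 hItop hconv
        h1n h1i h1c h1v h2n h2i h2c h2v
    set Z := {x : Rd d | μ.rnDeriv volume x = 0} with hZdef
    have hZm : MeasurableSet Z := PAaux.hZ_meas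
    have hZ1 := PAaux.minimizer_vanishes hI0 hItop h1n h1i h1c h1v
    have hZ2 := PAaux.minimizer_vanishes hI0 hItop h2n h2i h2c h2v
    have hN1 : volume ({x : Rd d | ¬ ξ₁ x = 0} ∩ Z) = 0 := by
      have := ae_iff.1 hZ1
      rwa [Measure.restrict_apply' hZm] at this
    have hN2 : volume ({x : Rd d | ¬ ξ₂ x = 0} ∩ Z) = 0 := by
      have := ae_iff.1 hZ2
      rwa [Measure.restrict_apply' hZm] at this
    have h0 : muc μ {x : Rd d | ¬ ξ₁ x = ξ₂ x} = 0 := ae_iff.1 hmuceq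
    obtain ⟨E', hsub, hE'm, hE'0⟩ := exists_measurable_superset_of_null h0
    have hE'int : ∫⁻ x in E', μ.rnDeriv volume x ∂volume = 0 := by
      rw [← withDensity_apply _ hE'm]; exact hE'0
    have haeE' : ∀ᵐ x ∂(volume.restrict E'), μ.rnDeriv volume x = 0 := by
      have := (lintegral_eq_zero_iff' ((μ.measurable_rnDeriv volume).aemeasurable)).1 hE'int
      filter_upwards [this] with x hx using hx
    have hN3 : volume (Zᶜ ∩ E') = 0 := by
      have : (volume.restrict E') Zᶜ = 0 := by
        have h1 := ae_iff.1 haeE'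
        have hset : {x : Rd d | ¬ μ.rnDeriv volume x = 0} = Zᶜ := by
          ext x; simp [hZdef]
        rwa [hset] at h1
      rwa [Measure.restrict_apply' hE'm] at this
    rw [Filter.EventuallyEq, ae_iff]
    refine measure_mono_null ?_
      (measure_union_null (measure_union_null hN1 hN2) hN3)
    intro x hx
    have hxne : ξ₁ x ≠ ξ₂ x := hx
    by_cases hxZ : x ∈ Z
    · left
      by_cases h10 : ξ₁ x = 0
      · right
        refine ⟨?_, hxZ⟩
        intro h20
        exact hxne (by rw [h10, h20])
      · left; exact ⟨h10, hxZ⟩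
    · right
      exact ⟨hxZ, hsub hxne⟩

end
end

section
/- Let X be an ℝ^d-valued random vector whose law μ is singular with respect to λ^d and compactly supported. Then there exist finite sets C(N) ⊆ ℝ^d, N ∈ ℕ, such that lim_{N→∞} |C(N)|/N = 0 and lim_{N→∞} E[φ(N^{1/d} d(X,C(N)))] = 0. -/
open MeasureTheory Filter Set
open scoped ENNReal NNReal

noncomputable section

lemma nrm_zero {d : ℕ} {nrm : Rd d → ℝ} (h : IsNorm nrm) : nrm 0 = 0 :=
  (h.2.1 0).2 rfl

lemma nrm_sum_le {d : ℕ} {nrm : Rd d → ℝ} (h : IsNorm nrm) {ι : Type*} (s : Finset ι)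
    (g : ι → Rd d) : nrm (∑ i ∈ s, g i) ≤ ∑ i ∈ s, nrm (g i) := by
  classical
  induction s using Finset.cons_induction with
  | empty => simp [nrm_zero h]
  | cons a s ha ih =>
    rw [Finset.sum_cons, Finset.sum_cons]
    exact (h.2.2.2 _ _).trans (by linarith)

lemma exists_M {d : ℕ} {nrm : Rd d → ℝ} (h : IsNorm nrm) :
    ∃ M : ℝ, 1 ≤ M ∧ ∀ (v : Rd d) (t : ℝ), 0 ≤ t → (∀ i, |v i| ≤ t) → nrm v ≤ M * t := by
  have hpos : ∀ i : Fin d, 0 ≤ nrm (Pi.single i 1) := fun i => h.1 _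
  have hsum : (0:ℝ) ≤ ∑ i, nrm (Pi.single i 1) :=
    Finset.sum_nonneg fun i _ => hpos i
  refine ⟨1 + ∑ i, nrm (Pi.single i 1), by linarith, fun v t ht hv => ?_⟩
  calc nrm v = nrm (∑ i, (Pi.single i (v i) : Rd d)) := by rw [Finset.univ_sum_single]
    _ ≤ ∑ i, nrm ((Pi.single i (v i) : Rd d)) := nrm_sum_le h _ _
    _ ≤ ∑ i : Fin d, nrm (Pi.single i 1) * t := by
        refine Finset.sum_le_sum fun i _ => ?_
        have e : (Pi.single i (v i) : Rd d) = (v i) • (Pi.single i (1:ℝ) : Rd d) := by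
          funext j; by_cases hj : j = i <;> simp [hj, Pi.single_apply]
        rw [e, h.2.2.1]
        calc |v i| * nrm (Pi.single i 1) ≤ t * nrm (Pi.single i 1) :=
              mul_le_mul_of_nonneg_right (hv i) (hpos i)
          _ = nrm (Pi.single i 1) * t := mul_comm _ _
    _ = (∑ i, nrm (Pi.single i 1)) * t := by rw [Finset.sum_mul]
    _ ≤ (1 + ∑ i, nrm (Pi.single i 1)) * t := by nlinarith

lemma dSet_nonneg {d : ℕ} {nrm : Rd d → ℝ} (h : IsNorm nrm) (x : Rd d) (A : Set (Rd d)) :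
    0 ≤ dSet nrm x A :=
  Real.sInf_nonneg (by rintro y ⟨z, _, rfl⟩; exact h.1 _)

lemma dSet_le {d : ℕ} {nrm : Rd d → ℝ} (h : IsNorm nrm) (x : Rd d) {A : Set (Rd d)}
    {c : Rd d} (hc : c ∈ A) : dSet nrm x A ≤ nrm (x - c) :=
  csInf_le ⟨0, by rintro y ⟨z, _, rfl⟩; exact h.1 _⟩ ⟨c, hc, rfl⟩
/-- the half-open grid cube indexed by `z` of side `t` -/
def gcube (d : ℕ) (t : ℝ) (z : Fin d → ℤ) : Set (Rd d) :=
  univ.pi fun i => Ico ((z i : ℝ) * t) ((z i + 1) * t)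

lemma mem_gcube_iff_floor {d : ℕ} {t : ℝ} (ht : 0 < t) {z : Fin d → ℤ} {w : Rd d} :
    w ∈ gcube d t z ↔ ∀ i, ⌊w i / t⌋ = z i := by
  constructor
  · intro hw i
    have h1 := (hw i (Set.mem_univ i)).1
    have h2 := (hw i (Set.mem_univ i)).2
    refine Int.floor_eq_iff.mpr ⟨?_, ?_⟩
    · rw [le_div_iff₀ ht]; linarith
    · rw [div_lt_iff₀ ht]; push_cast; linarith
  · intro hz i _
    have h := hz i
    have h1 : (z i : ℝ) ≤ w i / t := h ▸ Int.floor_le _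
    have h2 : w i / t < z i + 1 := by
      have := Int.lt_floor_add_one (w i / t); rw [h] at this; exact_mod_cast this
    constructor
    · calc (z i : ℝ) * t ≤ (w i / t) * t := by nlinarith
        _ = w i := by field_simp
    · calc w i = (w i / t) * t := by field_simp
        _ < ((z i : ℝ) + 1) * t := by nlinarith

lemma gcube_volume {d : ℕ} {t : ℝ} (ht : 0 < t) (z : Fin d → ℤ) :
    volume (gcube d t z) = ENNReal.ofReal (t ^ d) := by
  rw [gcube, volume_pi_pi]
  have : ∀ i : Fin d, volume (Ico ((z i : ℝ) * t) ((z i + 1) * t)) = ENNReal.ofReal t := by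
    intro i; rw [Real.volume_Ico]; ring_nf
  simp only [this, Finset.prod_const, Finset.card_univ, Fintype.card_fin]
  rw [← ENNReal.ofReal_pow ht.le]


lemma grid_lemma {d : ℕ} (hd : 0 < d) (nrm : Rd d → ℝ) (hnrm : IsNorm nrm)
    (M : ℝ) (hM : ∀ (v : Rd d) (t : ℝ), 0 ≤ t → (∀ i, |v i| ≤ t) → nrm v ≤ M * t)
    (A U : Set (Rd d)) (hA : A.Nonempty) (t : ℝ) (ht : 0 < t)
    (R : ℝ) (hR : 0 ≤ R) (hAR : ∀ x ∈ A, ∀ i, |x i| ≤ R)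
    (hsub : ∀ w y : Rd d, y ∈ A → (∀ i, |w i - y i| ≤ t) → w ∈ U) :
    ∃ C : Finset (Rd d), C.Nonempty ∧
      (C.card : ℝ≥0∞) * ENNReal.ofReal (t ^ d) ≤ volume U ∧
      ∀ x ∈ A, ∃ c ∈ C, c ∈ U ∧ nrm (x - c) ≤ M * t := by
  classical
  set n : ℤ := ⌈R / t⌉ + 1 with hn
  set Z : Finset (Fin d → ℤ) :=
    (Finset.Icc (fun _ => -n) (fun _ => n)).filter
      (fun z => (gcube d t z ∩ A).Nonempty) with hZ
  set p : (Fin d → ℤ) → Rd d := fun z i => (z i : ℝ) * t with hp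
  -- every point of A lies in the cube of its floor index, which is in Z
  have hfloor : ∀ x ∈ A, (fun i => ⌊x i / t⌋) ∈ Z ∧ x ∈ gcube d t (fun i => ⌊x i / t⌋) := by
    intro x hx
    have hcube : x ∈ gcube d t (fun i => ⌊x i / t⌋) := (mem_gcube_iff_floor ht).mpr fun i => rfl
    refine ⟨Finset.mem_filter.mpr ⟨?_, ⟨x, hcube, hx⟩⟩, hcube⟩
    rw [Finset.mem_Icc]
    constructor <;> intro i
    · simp only
      have h1 : |x i| ≤ R := hAR x hx i
      have : -(R / t) - 1 ≤ (⌊x i / t⌋ : ℝ) := by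
        have := Int.lt_floor_add_one (x i / t)
        have h2 : -(R/t) ≤ x i / t := by
          rw [neg_le, ← neg_div]; apply div_le_div_of_nonneg_right ?_ ht.le
          · linarith [abs_le.mp h1]
        linarith
      have hceil : (R / t : ℝ) ≤ ⌈R / t⌉ := Int.le_ceil _
      have : (-n : ℝ) ≤ (⌊x i / t⌋ : ℝ) := by push_cast [hn]; linarith
      exact_mod_cast this
    · simp only
      have h1 : |x i| ≤ R := hAR x hx i
      have hfl : (⌊x i / t⌋ : ℝ) ≤ x i / t := Int.floor_le _
      have h2 : x i / t ≤ R / t := div_le_div_of_nonneg_right (abs_le.mp h1).2 ht.le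
      have hceil : (R / t : ℝ) ≤ ⌈R / t⌉ := Int.le_ceil _
      have : (⌊x i / t⌋ : ℝ) ≤ (n : ℝ) := by push_cast [hn]; linarith
      exact_mod_cast this
  -- cubes with index in Z are contained in U
  have hcubeU : ∀ z ∈ Z, gcube d t z ⊆ U := by
    intro z hz w hw
    obtain ⟨y, hy, hyA⟩ := (Finset.mem_filter.mp hz).2
    refine hsub w y hyA fun i => ?_
    have h1 := (hw i (Set.mem_univ i)).1
    have h2 := (hw i (Set.mem_univ i)).2
    have h3 := (hy i (Set.mem_univ i)).1
    have h4 := (hy i (Set.mem_univ i)).2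
    rw [abs_le]; push_cast at h2 h4 ⊢; constructor <;> nlinarith
  -- the counting bound
  have hcount : (Z.card : ℝ≥0∞) * ENNReal.ofReal (t ^ d) ≤ volume U := by
    have hdisj : (Z : Set (Fin d → ℤ)).PairwiseDisjoint (gcube d t) := by
      intro z _ z' _ hzz'
      refine Set.disjoint_left.mpr fun w hw hw' => hzz' ?_
      funext i
      rw [← (mem_gcube_iff_floor ht).mp hw i, (mem_gcube_iff_floor ht).mp hw' i]
    have hmeas : ∀ z ∈ Z, MeasurableSet (gcube d t z) := fun z _ =>
      MeasurableSet.univ_pi fun i => measurableSet_Ico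
    have := measure_biUnion_finset hdisj hmeas (μ := volume)
    calc (Z.card : ℝ≥0∞) * ENNReal.ofReal (t ^ d)
        = ∑ z ∈ Z, volume (gcube d t z) := by
          simp [gcube_volume ht, Finset.sum_const, mul_comm]
      _ = volume (⋃ z ∈ Z, gcube d t z) := this.symm
      _ ≤ volume U := measure_mono (Set.iUnion₂_subset hcubeU)
  refine ⟨Z.image p, ?_, ?_, ?_⟩
  · obtain ⟨x, hx⟩ := hA
    exact ⟨p _, Finset.mem_image_of_mem p (hfloor x hx).1⟩
  · calc ((Z.image p).card : ℝ≥0∞) * ENNReal.ofReal (t ^ d)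
        ≤ (Z.card : ℝ≥0∞) * ENNReal.ofReal (t ^ d) := by
          gcongr; exact_mod_cast Finset.card_image_le
      _ ≤ volume U := hcount
  · intro x hx
    obtain ⟨hzZ, hcube⟩ := hfloor x hx
    refine ⟨p _, Finset.mem_image_of_mem p hzZ, ?_, ?_⟩
    · apply hcubeU _ hzZ
      intro i _
      constructor
      · simp [hp]
      · simp only [hp]
        push_cast; nlinarith
    · apply hM _ t ht.le
      intro i
      have h1 := (hcube i (Set.mem_univ i)).1
      have h2 := (hcube i (Set.mem_univ i)).2
      simp only [Pi.sub_apply, hp]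
      rw [abs_le]; push_cast at h2; constructor <;> nlinarith
-- rpow helper : for 0 < x, (x ^ (1/d))^d = x and related
lemma rpow_one_div_pow {d : ℕ} (hd : 0 < d) {x : ℝ} (hx : 0 ≤ x) :
    (x ^ ((1:ℝ)/(d:ℝ))) ^ (d:ℕ) = x := by
  have hd' : (d:ℝ) ≠ 0 := Nat.cast_ne_zero.mpr hd.ne'
  rw [← Real.rpow_natCast (x ^ ((1:ℝ)/(d:ℝ))) d, ← Real.rpow_mul hx,
    one_div_mul_cancel hd', Real.rpow_one]

lemma pow_rpow_one_div {d : ℕ} (hd : 0 < d) {x : ℝ} (hx : 0 ≤ x) :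
    ((x ^ (d:ℕ)) : ℝ) ^ ((1:ℝ)/(d:ℝ)) = x := by
  have hd' : (d:ℝ) ≠ 0 := Nat.cast_ne_zero.mpr hd.ne'
  rw [← Real.rpow_natCast x d, ← Real.rpow_mul hx, mul_one_div_cancel hd', Real.rpow_one]

set_option maxHeartbeats 2000000 in
lemma key_lemma {d : ℕ} (hd : 0 < d)
    (nrm : Rd d → ℝ) (hnrm : IsNorm nrm) (φ : ℝ → ℝ) (hφ : PhiOK φ)
    (μ : Measure (Rd d)) [IsProbabilityMeasure μ]
    (hsing : μ ⟂ₘ (volume : Measure (Rd d)))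
    (hcomp : ∃ K : Set (Rd d), IsCompact K ∧ μ Kᶜ = 0)
    (θ : ℝ) (hθ : 0 < θ) :
    ∃ N₀ : ℕ, ∃ Cb : ℕ → Finset (Rd d), ∀ N : ℕ, N₀ ≤ N →
      (Cb N).Nonempty ∧ ((Cb N).card : ℝ) ≤ θ * N ∧
      ∫⁻ x, ENNReal.ofReal (φ ((N:ℝ) ^ (1/(d:ℝ)) * dSet nrm x ((Cb N : Set (Rd d))))) ∂μ
        ≤ ENNReal.ofReal θ := by
  classical
  obtain ⟨K, hKc, hKnull⟩ := hcomp
  obtain ⟨M, hM1, hM⟩ := exists_M hnrm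
  have hM0 : 0 < M := lt_of_lt_of_le one_pos hM1
  -- μ K = 1 and K nonempty
  have hμK : μ K = 1 := by
    have h1 : μ univ ≤ μ K + μ Kᶜ := by
      rw [← Set.union_compl_self K]; exact measure_union_le _ _
    rw [hKnull, add_zero, measure_univ] at h1
    exact le_antisymm prob_le_one h1
  -- bound on K
  obtain ⟨r₀, hr₀⟩ := hKc.isBounded.subset_closedBall 0
  set R : ℝ := |r₀| + 1 with hR
  have hRpos : 0 < R := by positivity
  have hKR : ∀ x ∈ K, ∀ i, |x i| ≤ R := by
    intro x hx i
    rw [hR]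
    have h1 : dist x 0 ≤ r₀ := by simpa using hr₀ hx
    have h2 : dist (x i) ((0 : Rd d) i) ≤ dist x 0 := dist_le_pi_dist x 0 i
    have : |x i| ≤ r₀ := by simpa [Real.dist_eq] using h2.trans h1
    calc |x i| ≤ r₀ := this
      _ ≤ |r₀| + 1 := by cases abs_cases r₀ <;> linarith
  clear_value R
  -- singular part
  obtain ⟨S, hSm, hμS, hvS⟩ := hsing
  -- parameters
  set V₁ : ℝ := (2*R+4) ^ (d:ℕ) with hV₁
  have hV₁pos : 0 < V₁ := by rw [hV₁]; positivity
  clear_value V₁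
  set T : ℝ := M * (2*V₁/θ) ^ ((1:ℝ)/(d:ℝ)) with hT
  have hTpos : 0 ≤ T := by
    rw [hT]
    exact mul_nonneg hM0.le (Real.rpow_nonneg (div_nonneg (by linarith) hθ.le) _)
  clear_value T
  have hφT : 0 ≤ φ T := hφ.2.1 T hTpos
  -- τ with φ τ < θ/2
  have hhalf : 0 < θ/2 := by linarith
  obtain ⟨τ, hφτ, hτpos⟩ :=
    ((hφ.2.2.2.1.eventually (Iio_mem_nhds hhalf)).and self_mem_nhdsWithin).exists
  set ε' : ℝ := (θ/2) * (τ/M) ^ (d:ℕ) with hε'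
  have hε'pos : 0 < ε' := by
    rw [hε']
    exact mul_pos (by linarith) (pow_pos (div_pos hτpos hM0) _)
  clear_value ε'
  set εm : ℝ := min ((θ/2)/(φ T + 1)) (1/2) with hεm
  have hεmpos : 0 < εm := by
    rw [hεm]
    exact lt_min (div_pos hhalf (by linarith)) (by norm_num)
  have hεm2 : εm ≤ 1/2 := by rw [hεm]; exact min_le_right _ _
  have hεmle : εm ≤ (θ/2)/(φ T + 1) := by rw [hεm]; exact min_le_left _ _
  clear_value εm
  -- the null set A₀ and open U
  set A₀ : Set (Rd d) := Sᶜ ∩ K with hA₀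
  have hA₀vol : volume A₀ = 0 := le_antisymm ((measure_mono Set.inter_subset_left).trans hvS.le) (zero_le)
  have hμA₀ : 1 ≤ μ A₀ := by
    have hc : μ A₀ᶜ = 0 := by
      have : A₀ᶜ = S ∪ Kᶜ := by rw [hA₀, Set.compl_inter, compl_compl]
      rw [this]
      exact le_antisymm ((measure_union_le _ _).trans (by rw [hμS, hKnull, add_zero])) (zero_le)
    have h1 : μ univ ≤ μ A₀ + μ A₀ᶜ := by
      rw [← Set.union_compl_self A₀]; exact measure_union_le _ _
    rw [hc, add_zero, measure_univ] at h1; exact h1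
  obtain ⟨U₀, hAU₀, hU₀o, hU₀v⟩ :=
    Set.exists_isOpen_lt_of_lt A₀ (ENNReal.ofReal ε') (by rw [hA₀vol]; exact ENNReal.ofReal_pos.mpr hε'pos)
  set Box : Set (Rd d) := univ.pi fun _ => Ioo (-(R+1)) (R+1) with hBox
  have hBoxo : IsOpen Box := isOpen_set_pi Set.finite_univ (fun _ _ => isOpen_Ioo)
  set U : Set (Rd d) := U₀ ∩ Box with hU
  have hUo : IsOpen U := hU₀o.inter hBoxo
  have hAU : A₀ ⊆ U := by
    intro x hx
    refine ⟨hAU₀ hx, fun i _ => ?_⟩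
    have := hKR x hx.2 i
    rw [Set.mem_Ioo]; rw [abs_le] at this; constructor <;> linarith
  have hUvol : volume U < ENNReal.ofReal ε' :=
    lt_of_le_of_lt (measure_mono Set.inter_subset_left) hU₀v
  have hμU : μ U = 1 :=
    le_antisymm prob_le_one (le_trans hμA₀ (measure_mono hAU))
  -- inner compact K'
  obtain ⟨K', hK'U, hK'c, hK'lt⟩ :=
    hUo.measurableSet.exists_isCompact_lt_add (μ := μ) (measure_ne_top μ U)
      (ENNReal.ofReal_pos.mpr hεmpos).ne'
  have hμK'c : μ K'ᶜ ≤ ENNReal.ofReal εm := by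
    have h1 : μ K'ᶜ = μ univ - μ K' := measure_compl hK'c.measurableSet (measure_ne_top μ K')
    rw [h1, measure_univ, ← hμU]
    exact tsub_le_iff_right.mpr (le_of_lt (by rw [add_comm]; exact hK'lt))
  have hK'ne : K'.Nonempty := by
    rw [Set.nonempty_iff_ne_empty]
    intro h
    rw [h, measure_empty, zero_add] at hK'lt
    have : (1:ℝ≥0∞) < ENNReal.ofReal εm := hμU ▸ hK'lt
    have h2 : ENNReal.ofReal εm ≤ ENNReal.ofReal (1/2 : ℝ) := ENNReal.ofReal_le_ofReal hεm2
    have h3 : ENNReal.ofReal (1/2 : ℝ) < 1 := by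
      rw [show (1:ℝ≥0∞) = ENNReal.ofReal 1 by simp]
      exact ENNReal.ofReal_lt_ofReal_iff_of_nonneg (by norm_num) |>.mpr (by norm_num)
    exact absurd (this.trans_le (h2.trans h3.le)) (lt_irrefl _)
  have hK'R : ∀ x ∈ K', ∀ i, |x i| ≤ R + 1 := by
    intro x hx i
    have := (hK'U hx).2 i (Set.mem_univ i)
    rw [Set.mem_Ioo] at this; rw [abs_le]; constructor <;> linarith
  -- thickening radius
  obtain ⟨δ, hδpos, hδsub⟩ := hK'c.exists_thickening_subset_open hUo hK'U
  set rr : ℝ := min (δ/2) 1 with hrr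
  have hrrpos : 0 < rr := by rw [hrr]; exact lt_min (by linarith) one_pos
  have hrr1 : rr ≤ 1 := by rw [hrr]; exact min_le_right _ _
  have hrrδ : rr ≤ δ/2 := by rw [hrr]; exact min_le_left _ _
  clear_value rr
  have hsubfine : ∀ t : ℝ, 0 < t → t ≤ rr → ∀ w y : Rd d, y ∈ K' → (∀ i, |w i - y i| ≤ t) → w ∈ U := by
    intro t ht htr w y hy hwy
    apply hδsub
    rw [Metric.mem_thickening_iff]
    refine ⟨y, hy, ?_⟩
    have : dist w y ≤ t := by
      rw [dist_pi_le_iff ht.le]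
      intro i; rw [Real.dist_eq]; exact hwy i
    calc dist w y ≤ t := this
      _ ≤ rr := htr
      _ ≤ δ/2 := hrrδ
      _ < δ := by linarith
  -- the second box for the coarse grid
  set Box2 : Set (Rd d) := univ.pi fun _ => Ioo (-(R+2)) (R+2) with hBox2
  have hBox2vol : volume Box2 ≤ ENNReal.ofReal V₁ := by
    rw [hBox2, volume_pi_pi]
    have hio : volume (Ioo (-(R+2)) (R+2)) = ENNReal.ofReal (2*R+4) := by
      rw [Real.volume_Ioo]; congr 1; ring
    rw [Finset.prod_congr rfl (fun i _ => hio), Finset.prod_const, Finset.card_univ,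
      Fintype.card_fin, hV₁, ← ENNReal.ofReal_pow (by linarith)]
  -- choose N₀
  set N₀ : ℕ := ⌈max (2*ε'/(θ * rr ^ (d:ℕ))) (max (2*V₁/θ) 1)⌉₊ + 1 with hN₀
  clear_value N₀
  refine ⟨N₀, ?_⟩
  -- construct for each N
  have main : ∀ N : ℕ, N₀ ≤ N → ∃ C : Finset (Rd d),
      C.Nonempty ∧ ((C.card : ℝ) ≤ θ * N) ∧
      ∫⁻ x, ENNReal.ofReal (φ ((N:ℝ) ^ (1/(d:ℝ)) * dSet nrm x ((C : Set (Rd d))))) ∂μ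
        ≤ ENNReal.ofReal θ := by
    intro N hN
    have hNR : (N:ℝ) ≥ max (2*ε'/(θ * rr ^ (d:ℕ))) (max (2*V₁/θ) 1) := by
      calc max (2*ε'/(θ * rr ^ (d:ℕ))) (max (2*V₁/θ) 1) ≤ (⌈_⌉₊ : ℝ) := Nat.le_ceil _
        _ ≤ (N₀ : ℝ) := by rw [hN₀]; push_cast; linarith
        _ ≤ (N:ℝ) := Nat.cast_le.mpr hN
    have hN1 : (1:ℝ) ≤ N := le_trans (le_trans (le_max_right _ _) (le_max_right _ _)) hNR
    have hNpos : (0:ℝ) < N := by linarith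
    -- fine scale
    set h₁ : ℝ := (2*ε'/(θ*N)) ^ ((1:ℝ)/(d:ℝ)) with hh₁
    have harg₁ : 0 < 2*ε'/(θ*N) := by positivity
    have hh₁pos : 0 < h₁ := by rw [hh₁]; exact Real.rpow_pos_of_pos harg₁ _
    have hh₁d : h₁ ^ (d:ℕ) = 2*ε'/(θ*N) := by rw [hh₁]; exact rpow_one_div_pow hd harg₁.le
    clear_value h₁
    have hh₁rr : h₁ ≤ rr := by
      have h1 : 2*ε'/(θ*N) ≤ rr ^ (d:ℕ) := by
        rw [div_le_iff₀ (by positivity)]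
        have h2 : 2*ε'/(θ * rr ^ (d:ℕ)) ≤ N := le_trans (le_max_left _ _) hNR
        rw [div_le_iff₀ (by positivity)] at h2
        nlinarith [pow_pos hrrpos (d:ℕ)]
      calc h₁ = (2*ε'/(θ*N)) ^ ((1:ℝ)/(d:ℝ)) := hh₁
        _ ≤ (rr ^ (d:ℕ) : ℝ) ^ ((1:ℝ)/(d:ℝ)) :=
            Real.rpow_le_rpow harg₁.le h1 (by positivity)
        _ = rr := pow_rpow_one_div hd hrrpos.le
    -- coarse scale
    set h₂ : ℝ := (2*V₁/(θ*N)) ^ ((1:ℝ)/(d:ℝ)) with hh₂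
    have harg₂ : 0 < 2*V₁/(θ*N) := by positivity
    have hh₂pos : 0 < h₂ := by rw [hh₂]; exact Real.rpow_pos_of_pos harg₂ _
    have hh₂d : h₂ ^ (d:ℕ) = 2*V₁/(θ*N) := by rw [hh₂]; exact rpow_one_div_pow hd harg₂.le
    clear_value h₂
    have hh₂1 : h₂ ≤ 1 := by
      have h1 : 2*V₁/(θ*N) ≤ 1 ^ (d:ℕ) := by
        rw [one_pow, div_le_one (by positivity)]
        have h2 : 2*V₁/θ ≤ N := le_trans (le_trans (le_max_left _ _) (le_max_right _ _)) hNR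
        rw [div_le_iff₀ hθ] at h2; nlinarith
      calc h₂ = (2*V₁/(θ*N)) ^ ((1:ℝ)/(d:ℝ)) := hh₂
        _ ≤ ((1:ℝ) ^ (d:ℕ)) ^ ((1:ℝ)/(d:ℝ)) := Real.rpow_le_rpow harg₂.le h1 (by positivity)
        _ = 1 := pow_rpow_one_div hd one_pos.le
    -- fine grid
    obtain ⟨C₁, hC₁ne, hC₁card, hC₁cover⟩ :=
      grid_lemma hd nrm hnrm M hM K' U hK'ne h₁ hh₁pos (R+1) (by linarith) hK'R
        (fun w y hy hwy => hsubfine h₁ hh₁pos hh₁rr w y hy hwy)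
    -- coarse grid
    obtain ⟨C₂, hC₂ne, hC₂card, hC₂cover⟩ :=
      grid_lemma hd nrm hnrm M hM K Box2 (Set.nonempty_iff_ne_empty.mpr (by
        intro h; rw [h, measure_empty] at hμK; exact one_ne_zero hμK.symm)) h₂ hh₂pos R hRpos.le hKR
        (fun w y hy hwy => by
          refine fun i _ => ?_
          have h1 := hKR y hy i
          have h2 := hwy i
          rw [Set.mem_Ioo]
          rw [abs_le] at h1 h2
          constructor <;> nlinarith)
    -- card bounds
    have hC₁c : (C₁.card : ℝ) ≤ θ/2 * N := by
      have h1 : (C₁.card : ℝ≥0∞) * ENNReal.ofReal (h₁ ^ (d:ℕ)) ≤ ENNReal.ofReal ε' :=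
        hC₁card.trans hUvol.le
      rw [show ((C₁.card : ℝ≥0∞)) = ENNReal.ofReal (C₁.card : ℝ) by simp,
        ← ENNReal.ofReal_mul (by positivity)] at h1
      have h2 : (C₁.card : ℝ) * (h₁ ^ (d:ℕ)) ≤ ε' :=
        (ENNReal.ofReal_le_ofReal_iff hε'pos.le).mp h1
      rw [hh₁d] at h2
      have h3 : (C₁.card:ℝ) ≤ ε' / (2*ε'/(θ*N)) := (le_div_iff₀ harg₁).mpr h2
      have h4 : ε' / (2*ε'/(θ*N)) = θ/2 * N := by
        field_simp
      linarith
    have hC₂c : (C₂.card : ℝ) ≤ θ/2 * N := by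
      have h1 : (C₂.card : ℝ≥0∞) * ENNReal.ofReal (h₂ ^ (d:ℕ)) ≤ ENNReal.ofReal V₁ :=
        hC₂card.trans hBox2vol
      rw [show ((C₂.card : ℝ≥0∞)) = ENNReal.ofReal (C₂.card : ℝ) by simp,
        ← ENNReal.ofReal_mul (by positivity)] at h1
      have h2 : (C₂.card : ℝ) * (h₂ ^ (d:ℕ)) ≤ V₁ :=
        (ENNReal.ofReal_le_ofReal_iff hV₁pos.le).mp h1
      rw [hh₂d] at h2
      have h3 : (C₂.card:ℝ) ≤ V₁ / (2*V₁/(θ*N)) := (le_div_iff₀ harg₂).mpr h2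
      have h4 : V₁ / (2*V₁/(θ*N)) = θ/2 * N := by
        field_simp
      linarith
    refine ⟨C₁ ∪ C₂, Finset.Nonempty.mono Finset.subset_union_left hC₁ne, ?_, ?_⟩
    · calc ((C₁ ∪ C₂).card : ℝ) ≤ (C₁.card : ℝ) + C₂.card := by
            exact_mod_cast Finset.card_union_le C₁ C₂
        _ ≤ θ * N := by linarith
    -- the integral bound
    · set C : Finset (Rd d) := C₁ ∪ C₂ with hC
      have hNd : (0:ℝ) ≤ (N:ℝ) ^ ((1:ℝ)/(d:ℝ)) := Real.rpow_nonneg hNpos.le _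
      -- distances
      have hfine : ∀ x ∈ K', (N:ℝ) ^ ((1:ℝ)/(d:ℝ)) * dSet nrm x (C : Set (Rd d)) ≤ τ := by
        intro x hx
        obtain ⟨c, hcC, hcU, hcnrm⟩ := hC₁cover x hx
        have h1 : dSet nrm x (C : Set (Rd d)) ≤ M * h₁ := by
          refine le_trans (dSet_le hnrm x ?_) hcnrm
          exact Finset.mem_coe.mpr (Finset.mem_union_left _ hcC)
        have h2 : (N:ℝ) ^ ((1:ℝ)/(d:ℝ)) * h₁ = (2*ε'/θ) ^ ((1:ℝ)/(d:ℝ)) := by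
          rw [hh₁, ← Real.mul_rpow hNpos.le harg₁.le]
          congr 1
          field_simp
        have h3 : (2*ε'/θ : ℝ) ^ ((1:ℝ)/(d:ℝ)) = τ/M := by
          have : (2*ε'/θ : ℝ) = (τ/M) ^ (d:ℕ) := by
            rw [hε']
            field_simp
          rw [this, pow_rpow_one_div hd (by positivity)]
        calc (N:ℝ) ^ ((1:ℝ)/(d:ℝ)) * dSet nrm x (C : Set (Rd d))
            ≤ (N:ℝ) ^ ((1:ℝ)/(d:ℝ)) * (M * h₁) := by
              apply mul_le_mul_of_nonneg_left h1 hNd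
          _ = M * ((N:ℝ) ^ ((1:ℝ)/(d:ℝ)) * h₁) := by ring
          _ = M * (τ/M) := by rw [h2, h3]
          _ = τ := by field_simp
      have hcoarse : ∀ x ∈ K, (N:ℝ) ^ ((1:ℝ)/(d:ℝ)) * dSet nrm x (C : Set (Rd d)) ≤ T := by
        intro x hx
        obtain ⟨c, hcC, hcU, hcnrm⟩ := hC₂cover x hx
        have h1 : dSet nrm x (C : Set (Rd d)) ≤ M * h₂ := by
          refine le_trans (dSet_le hnrm x ?_) hcnrm
          exact Finset.mem_coe.mpr (Finset.mem_union_right _ hcC)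
        have h2 : (N:ℝ) ^ ((1:ℝ)/(d:ℝ)) * h₂ = (2*V₁/θ) ^ ((1:ℝ)/(d:ℝ)) := by
          rw [hh₂, ← Real.mul_rpow hNpos.le harg₂.le]
          congr 1
          field_simp
        calc (N:ℝ) ^ ((1:ℝ)/(d:ℝ)) * dSet nrm x (C : Set (Rd d))
            ≤ (N:ℝ) ^ ((1:ℝ)/(d:ℝ)) * (M * h₂) := mul_le_mul_of_nonneg_left h1 hNd
          _ = M * ((N:ℝ) ^ ((1:ℝ)/(d:ℝ)) * h₂) := by ring
          _ = T := by rw [h2, hT]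
      -- pointwise a.e. bound
      have hae : ∀ᵐ x ∂μ, ENNReal.ofReal (φ ((N:ℝ) ^ (1/(d:ℝ)) * dSet nrm x (C : Set (Rd d))))
          ≤ ENNReal.ofReal (φ τ) + K'ᶜ.indicator (fun _ => ENNReal.ofReal (φ T)) x := by
        have hKae : ∀ᵐ x ∂μ, x ∈ K := by
          filter_upwards [(MeasureTheory.measure_eq_zero_iff_ae_notMem).mp hKnull] with x hx
          simpa using hx
        filter_upwards [hKae] with x hxK
        have hD0 : 0 ≤ (N:ℝ) ^ ((1:ℝ)/(d:ℝ)) * dSet nrm x (C : Set (Rd d)) :=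
          mul_nonneg hNd (dSet_nonneg hnrm x _)
        by_cases hx' : x ∈ K'
        · have h1 : φ ((N:ℝ) ^ (1/(d:ℝ)) * dSet nrm x (C : Set (Rd d))) ≤ φ τ :=
            hφ.1 hD0 hτpos.le (hfine x hx')
          calc ENNReal.ofReal (φ _) ≤ ENNReal.ofReal (φ τ) := ENNReal.ofReal_le_ofReal h1
            _ ≤ _ := le_self_add
        · have h1 : φ ((N:ℝ) ^ (1/(d:ℝ)) * dSet nrm x (C : Set (Rd d))) ≤ φ T :=
            hφ.1 hD0 hTpos (hcoarse x hxK)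
          have h2 : K'ᶜ.indicator (fun _ => ENNReal.ofReal (φ T)) x = ENNReal.ofReal (φ T) :=
            Set.indicator_of_mem (Set.mem_compl hx') (fun _ => ENNReal.ofReal (φ T))
          calc ENNReal.ofReal (φ _) ≤ ENNReal.ofReal (φ T) := ENNReal.ofReal_le_ofReal h1
            _ = K'ᶜ.indicator (fun _ => ENNReal.ofReal (φ T)) x := h2.symm
            _ ≤ _ := le_add_self
      calc ∫⁻ x, ENNReal.ofReal (φ ((N:ℝ) ^ (1/(d:ℝ)) * dSet nrm x (C : Set (Rd d)))) ∂μ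
          ≤ ∫⁻ x, (ENNReal.ofReal (φ τ) + K'ᶜ.indicator (fun _ => ENNReal.ofReal (φ T)) x) ∂μ :=
            lintegral_mono_ae hae
        _ = (∫⁻ _, ENNReal.ofReal (φ τ) ∂μ) +
              ∫⁻ x, K'ᶜ.indicator (fun _ => ENNReal.ofReal (φ T)) x ∂μ :=
            lintegral_add_left measurable_const _
        _ = ENNReal.ofReal (φ τ) + ENNReal.ofReal (φ T) * μ K'ᶜ := by
            rw [lintegral_const, measure_univ, mul_one,
              lintegral_indicator hK'c.measurableSet.compl, setLIntegral_const]
        _ ≤ ENNReal.ofReal (θ/2) + ENNReal.ofReal (θ/2) := by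
            refine add_le_add (ENNReal.ofReal_le_ofReal hφτ.le) ?_
            calc ENNReal.ofReal (φ T) * μ K'ᶜ ≤ ENNReal.ofReal (φ T) * ENNReal.ofReal εm := by gcongr
                _ = ENNReal.ofReal (φ T * εm) := (ENNReal.ofReal_mul hφT).symm
                _ ≤ ENNReal.ofReal (θ/2) := by
                    apply ENNReal.ofReal_le_ofReal
                    have h1 : εm ≤ (θ/2)/(φ T + 1) := hεmle
                    have h2 : φ T * εm ≤ φ T * ((θ/2)/(φ T + 1)) :=
                      mul_le_mul_of_nonneg_left h1 hφT
                    have h3 : φ T * ((θ/2)/(φ T + 1)) ≤ θ/2 := by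
                      rw [mul_div_assoc'] at *
                      rw [div_le_iff₀ (by linarith)]
                      nlinarith
                    linarith
        _ = ENNReal.ofReal θ := by rw [← ENNReal.ofReal_add hhalf.le hhalf.le]; norm_num
  choose! Cb hCb using main
  exact ⟨Cb, hCb⟩

/-- The singular compactly supported case: there are codebooks with `|C(N)|/N → 0` and
`E[φ(N^{1/d} d(X,C(N)))] → 0`. -/
theorem statement17 {d : ℕ} (hd : 0 < d)
    (nrm : Rd d → ℝ) (hnrm : IsNorm nrm) (φ : ℝ → ℝ) (hφ : PhiOK φ)
    (μ : Measure (Rd d)) [IsProbabilityMeasure μ]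
    (hsing : μ ⟂ₘ (volume : Measure (Rd d)))
    (hcomp : ∃ K : Set (Rd d), IsCompact K ∧ μ Kᶜ = 0) :
    ∃ C : ℕ → Finset (Rd d), (∀ N, (C N).Nonempty) ∧
      Tendsto (fun N : ℕ => ((C N).card : ℝ) / N) atTop (nhds 0) ∧
      Tendsto (fun N : ℕ =>
          ∫⁻ x, ENNReal.ofReal (φ ((N:ℝ) ^ (1/(d:ℝ)) * dSet nrm x ((C N : Set (Rd d))))) ∂μ)
        atTop (nhds 0) := by
  classical
  have key : ∀ m : ℕ, ∃ N₀ : ℕ, ∃ Cb : ℕ → Finset (Rd d), ∀ N : ℕ, N₀ ≤ N →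
      (Cb N).Nonempty ∧ ((Cb N).card : ℝ) ≤ (1/((m:ℝ)+1)) * N ∧
      ∫⁻ x, ENNReal.ofReal (φ ((N:ℝ) ^ (1/(d:ℝ)) * dSet nrm x ((Cb N : Set (Rd d))))) ∂μ
        ≤ ENNReal.ofReal (1/((m:ℝ)+1)) := fun m =>
    key_lemma hd nrm hnrm φ hφ μ hsing hcomp (1/((m:ℝ)+1)) (by positivity)
  choose N₀ Cb hCb using key
  -- strictly increasing thresholds
  set t : ℕ → ℕ := fun m => Nat.rec (N₀ 0 + 1) (fun m tm => max (tm + 1) (N₀ (m+1) + 1)) m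
    with ht
  have htN₀ : ∀ m, N₀ m < t m := by
    intro m
    cases m with
    | zero => simp [ht]
    | succ m =>
      exact lt_of_lt_of_le (Nat.lt_succ_self _) (le_max_right _ _)
  have htmono : StrictMono t :=
    strictMono_nat_of_lt_succ fun m => lt_of_lt_of_le (Nat.lt_succ_self _) (le_max_left _ _)
  have htm : ∀ m, m ≤ t m := by
    intro m
    induction m with
    | zero => exact Nat.zero_le _
    | succ m ih => exact Nat.succ_le_of_lt (lt_of_le_of_lt ih (htmono (Nat.lt_succ_self m)))
  set s : ℕ → ℕ := fun N => Nat.findGreatest (fun m => t m ≤ N) N with hs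
  have hsle : ∀ N, t 0 ≤ N → t (s N) ≤ N := by
    intro N hN
    rw [hs]
    exact Nat.findGreatest_spec (P := fun m => t m ≤ N) (Nat.zero_le N) hN
  have hsge : ∀ m N, t m ≤ N → m ≤ s N := by
    intro m N h
    rw [hs]
    exact Nat.le_findGreatest ((htm m).trans h) h
  have hstend : Tendsto s atTop atTop :=
    tendsto_atTop_atTop.mpr fun m => ⟨t m, fun N hN => hsge m N hN⟩
  refine ⟨fun N => if t 0 ≤ N then Cb (s N) N else {fun _ => 0}, ?_, ?_, ?_⟩
  · intro N
    by_cases hN : t 0 ≤ N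
    · simp only [if_pos hN]
      exact (hCb (s N) N (le_trans (htN₀ _).le (hsle N hN))).1
    · simp only [if_neg hN]
      exact Finset.singleton_nonempty _
  · apply squeeze_zero' (g := fun N => 1/((s N : ℝ)+1))
    · filter_upwards with N
      positivity
    · filter_upwards [eventually_ge_atTop (max (t 0) 1)] with N hN
      have hN0 : t 0 ≤ N := le_trans (le_max_left _ _) hN
      have hN1 : 1 ≤ N := le_trans (le_max_right _ _) hN
      have hNpos : (0:ℝ) < N := by exact_mod_cast hN1
      simp only [if_pos hN0]
      rw [div_le_iff₀ hNpos]
      exact (hCb (s N) N (le_trans (htN₀ _).le (hsle N hN0))).2.1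
    · exact tendsto_one_div_add_atTop_nhds_zero_nat.comp hstend
  · apply tendsto_of_tendsto_of_tendsto_of_le_of_le'
      (tendsto_const_nhds : Tendsto (fun _ : ℕ => (0:ℝ≥0∞)) atTop (nhds 0))
      (show Tendsto (fun N : ℕ => ENNReal.ofReal (1/((s N : ℝ)+1))) atTop (nhds 0) by
        have h1 : Tendsto (fun n : ℕ => ENNReal.ofReal (1/((n : ℝ)+1))) atTop (nhds 0) := by
          rw [show (0:ℝ≥0∞) = ENNReal.ofReal 0 by simp]
          exact ENNReal.tendsto_ofReal tendsto_one_div_add_atTop_nhds_zero_nat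
        exact h1.comp hstend)
    · filter_upwards with N
      exact zero_le
    · filter_upwards [eventually_ge_atTop (t 0)] with N hN0
      simp only [if_pos hN0]
      exact (hCb (s N) N (le_trans (htN₀ _).le (hsle N hN0))).2.2

end
end

section
/- Let p > 0 and c > 0 be such that φ(t) ≤ c(1 + t^p) for all t ≥ 0, and let β > (p+d)/d. Then Ψ(t) = t^p (log₊ t)^β (where log₊ t = max(log t, 0)) satisfies the growth condition (G) for φ. -/
open MeasureTheory Filter Set
open scoped ENNReal NNReal

noncomputable section

/-- Growth condition (G) for `φ`: there exist a positive decreasing summable sequence `(α_n)`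
and a positive increasing sequence `(r_n)` with `∑ φ(α_n^{-1/d} r_{n+1}) / Ψ(r_n) < ∞`. -/
def GrowthG (d : ℕ) (φ Ψ : ℝ → ℝ) : Prop :=
  ∃ α r : ℕ → ℝ, (∀ n, 0 < α n) ∧ Antitone α ∧ Summable α ∧
    (∀ n, 0 < r n) ∧ Monotone r ∧
    (∑' n, ENNReal.ofReal (φ ((α n) ^ (-1 / (d:ℝ)) * r (n+1))) / ENNReal.ofReal (Ψ (r n))) ≠ ⊤

/-- If `φ(t) ≤ c(1 + t^p)` and `β > (p+d)/d` then `Ψ(t) = t^p (log₊ t)^β` satisfies (G). -/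
theorem statement19 {d : ℕ} (hd : 0 < d) (φ : ℝ → ℝ) (hφ : PhiOK φ)
    (p c : ℝ) (hp : 0 < p) (hc : 0 < c)
    (hbound : ∀ t : ℝ, 0 ≤ t → φ t ≤ c * (1 + t ^ p))
    (β : ℝ) (hβ : (p + d) / d < β) :
    GrowthG d φ (fun t => t ^ p * (max (Real.log t) 0) ^ β) := by
  have hd' : (0:ℝ) < d := by exact_mod_cast hd
  rw [add_div, div_self hd'.ne'] at hβ
  have hβ1 : 1 < β := by have : 0 < p / d := div_pos hp hd'; linarith
  have hβ0 : 0 ≤ β := by linarith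
  set s := (1 + d*(β-1)/p)/2 with hs_def
  have hX : 1 < d*(β-1)/p := by
    rw [lt_div_iff₀ hp]
    have hpd : p < (β-1)*d := (div_lt_iff₀ hd').mp (by linarith)
    linarith
  have hs1 : 1 < s := by rw [hs_def]; linarith
  have hsX : s < d*(β-1)/p := by rw [hs_def]; linarith
  set q := s*p/d - β with hq_def
  have hspd : 0 ≤ s*p/d := by positivity
  have hq : q < -1 := by
    have h1 : s*p < d*(β-1) := by
      have := mul_lt_mul_of_pos_right hsX hp
      rwa [div_mul_cancel₀ _ hp.ne'] at this
    have h2 : s*p/d < β-1 := (div_lt_iff₀ hd').mpr (by linarith)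
    rw [hq_def]; linarith
  refine ⟨fun n => ((n:ℝ)+1) ^ (-s), fun n => Real.exp ((n:ℝ)+2), ?_, ?_, ?_, ?_, ?_, ?_⟩
  · intro n; positivity
  · intro m n hmn
    have hc' : (m:ℝ) ≤ n := Nat.cast_le.mpr hmn
    exact Real.rpow_le_rpow_of_nonpos (by positivity) (by linarith) (by linarith)
  · have h := (summable_nat_add_iff 1).2 ((Real.summable_nat_rpow (p := -s)).2 (by linarith))
    refine h.congr fun n => ?_
    push_cast; ring_nf
  · intro n; exact Real.exp_pos _
  · intro m n hmn
    have hc' : (m:ℝ) ≤ n := Nat.cast_le.mpr hmn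
    exact Real.exp_le_exp.2 (by linarith)
  -- main estimate
  set K := 2 * c * Real.exp p with hK_def
  have hK : 0 < K := by positivity
  have key : ∀ n : ℕ,
      ENNReal.ofReal (φ ((((n:ℝ)+1) ^ (-s)) ^ (-1 / (d:ℝ)) * Real.exp ((((n+1:ℕ)):ℝ)+2))) /
        ENNReal.ofReal (Real.exp ((n:ℝ)+2) ^ p * (max (Real.log (Real.exp ((n:ℝ)+2))) 0) ^ β)
      ≤ ENNReal.ofReal (K * ((n:ℝ)+1) ^ q) := by
    intro n
    set A : ℝ := (n:ℝ)+1 with hA_def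
    have hA : 0 < A := by positivity
    have hA1 : (1:ℝ) ≤ A := by rw [hA_def]; linarith [Nat.cast_nonneg (α := ℝ) n]
    have hbase : (A ^ (-s)) ^ (-1 / (d:ℝ)) = A ^ (s/(d:ℝ)) := by
      rw [← Real.rpow_mul hA.le]
      congr 1; field_simp
    -- Ψ (r n)
    have hΨ : Real.exp ((n:ℝ)+2) ^ p * (max (Real.log (Real.exp ((n:ℝ)+2))) 0) ^ β
        = Real.exp (((n:ℝ)+2)*p) * ((n:ℝ)+2) ^ β := by
      rw [Real.log_exp, max_eq_left (by positivity), Real.exp_mul]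
    have hΨpos : 0 < Real.exp (((n:ℝ)+2)*p) * ((n:ℝ)+2) ^ β := by positivity
    set t := A ^ (s/(d:ℝ)) * Real.exp ((n:ℝ)+3) with ht_def
    have harg : (((n+1:ℕ)):ℝ)+2 = (n:ℝ)+3 := by push_cast; ring
    have ht0 : 0 < t := by positivity
    have ht1 : (1:ℝ) ≤ t := by
      have h1 : (1:ℝ) ≤ A ^ (s/(d:ℝ)) := Real.one_le_rpow hA1 (by positivity)
      have h2 : (1:ℝ) ≤ Real.exp ((n:ℝ)+3) := Real.one_le_exp (by positivity)
      nlinarith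
    have htp1 : (1:ℝ) ≤ t ^ p := Real.one_le_rpow ht1 hp.le
    have hφt : φ t ≤ 2 * c * t ^ p := by
      have := hbound t ht0.le
      nlinarith
    have htp : t ^ p = A ^ (s*p/(d:ℝ)) * (Real.exp ((((n:ℝ)+2)*p)) * Real.exp p) := by
      rw [ht_def, Real.mul_rpow (by positivity) (by positivity), ← Real.rpow_mul hA.le,
        ← Real.exp_mul, ← Real.exp_add]
      congr 1
      · congr 1; ring
      · congr 1; ring
    have hratio : φ t / (Real.exp (((n:ℝ)+2)*p) * ((n:ℝ)+2) ^ β) ≤ K * A ^ q := by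
      set E := Real.exp (((n:ℝ)+2)*p) with hE
      have hE0 : (0:ℝ) < E := Real.exp_pos _
      have hAβ : (0:ℝ) < A ^ β := by positivity
      have hb2 : A ^ β ≤ ((n:ℝ)+2) ^ β :=
        Real.rpow_le_rpow hA.le (by rw [hA_def]; linarith) hβ0
      have h2 : (2*c*t^p) / (E * ((n:ℝ)+2) ^ β) = K * (A ^ (s*p/(d:ℝ)) / ((n:ℝ)+2) ^ β) := by
        rw [htp, hK_def]; field_simp
      have h4 : A ^ (s*p/(d:ℝ)) / A ^ β = A ^ q := by
        rw [hq_def, Real.rpow_sub hA]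
      calc φ t / (E * ((n:ℝ)+2) ^ β) ≤ (2*c*t^p) / (E * ((n:ℝ)+2) ^ β) := by gcongr
        _ = K * (A ^ (s*p/(d:ℝ)) / ((n:ℝ)+2) ^ β) := h2
        _ ≤ K * (A ^ (s*p/(d:ℝ)) / A ^ β) := by gcongr
        _ = K * A ^ q := by rw [h4]
    calc ENNReal.ofReal (φ ((A ^ (-s)) ^ (-1 / (d:ℝ)) * Real.exp ((((n+1:ℕ)):ℝ)+2))) /
          ENNReal.ofReal (Real.exp ((n:ℝ)+2) ^ p * (max (Real.log (Real.exp ((n:ℝ)+2))) 0) ^ β)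
        = ENNReal.ofReal (φ t / (Real.exp (((n:ℝ)+2)*p) * ((n:ℝ)+2) ^ β)) := by
          rw [hbase, harg, hΨ, ← ht_def, ENNReal.ofReal_div_of_pos hΨpos]
      _ ≤ ENNReal.ofReal (K * A ^ q) := ENNReal.ofReal_le_ofReal hratio
  have hsum2 : Summable (fun n : ℕ => K * ((n:ℝ)+1) ^ q) := by
    have h := (summable_nat_add_iff 1).2 ((Real.summable_nat_rpow (p := q)).2 hq)
    exact (h.congr fun n => by push_cast; ring_nf).mul_left K
  have hle := (ENNReal.tsum_le_tsum key).trans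
    (le_of_eq (ENNReal.ofReal_tsum_of_nonneg (fun n => by positivity) hsum2).symm)
  exact ne_top_of_le_ne_top ENNReal.ofReal_ne_top hle

end
end
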